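/- arXiv:2309.04298 — 6 statements merged into one kernel-verified Lean document; each statement's English description precedes it below -/
import Mathlib

section
/- Let d ≥ 1 and let Σ ∈ ℝ^{d×d} be symmetric positive definite. The following are equivalent: (i) there exist σ² > 0, a permutation π of {1,…,d}, and a matrix B ∈ ℝ^{d×d} that is strictly lower triangular with respect to π, such that Σ = σ² (I_d − B)^{-1} (I_d − B)^{-T}; (ii) there exist σ² > 0 and a permutation π of {1,…,d} such that for every k ∈ {1,…,d}, with p(k) := {π(1),…,π(k−1)}, one has Σ_{π(k),π(k)|p(k)} = σ². -/
open Matrix Finset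

/-- Conditional covariance `Σ_{k,i|S} = Σ_{k,i} - Σ_{k,S} (Σ_{S,S})⁻¹ Σ_{S,i}`. -/
noncomputable def condCov {d : ℕ} (M : Matrix (Fin d) (Fin d) ℝ) (S : Finset (Fin d))
    (k i : Fin d) : ℝ :=
  M k i - ∑ a : S, ∑ b : S, M k a * (Matrix.of fun a b : S => M a b)⁻¹ a b * M b i

/-- `B` is strictly lower triangular with respect to the permutation `π`. -/
def IsStrictLowerWrt {d : ℕ} (B : Matrix (Fin d) (Fin d) ℝ) (π : Equiv.Perm (Fin d)) : Prop :=
  ∀ a b : Fin d, a ≤ b → B (π a) (π b) = 0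

variable {d : ℕ}

/-- lower triangular: zero above the diagonal -/
def Lo (A : Matrix (Fin d) (Fin d) ℝ) : Prop := ∀ i j : Fin d, i < j → A i j = 0

lemma lo_blockTriangular {A : Matrix (Fin d) (Fin d) ℝ} (h : Lo A) :
    A.BlockTriangular OrderDual.toDual := fun i j hij => h i j hij

lemma Lo.mul {A B : Matrix (Fin d) (Fin d) ℝ} (hA : Lo A) (hB : Lo B) : Lo (A * B) := by
  intro i j hij
  rw [Matrix.mul_apply]
  refine Finset.sum_eq_zero fun k _ => ?_
  rcases lt_or_ge i k with h | h
  · rw [hA i k h, zero_mul]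
  · rw [hB k j (lt_of_le_of_lt h hij), mul_zero]

lemma Lo.det_eq {A : Matrix (Fin d) (Fin d) ℝ} (h : Lo A) : A.det = ∏ i, A i i :=
  Matrix.det_of_lowerTriangular A (lo_blockTriangular h)

lemma Lo.isUnit_det {A : Matrix (Fin d) (Fin d) ℝ} (h : Lo A) (hdiag : ∀ i, A i i = 1) :
    IsUnit A.det := by
  rw [h.det_eq]
  simp [hdiag]

lemma Lo.inv {A : Matrix (Fin d) (Fin d) ℝ} (h : Lo A) (hdiag : ∀ i, A i i = 1) : Lo A⁻¹ := by
  have : Invertible A := A.invertibleOfIsUnitDet (h.isUnit_det hdiag)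
  exact fun i j hij => Matrix.blockTriangular_inv_of_blockTriangular (lo_blockTriangular h) hij

lemma Lo.inv_diag {A : Matrix (Fin d) (Fin d) ℝ} (h : Lo A) (hdiag : ∀ i, A i i = 1) (i : Fin d) :
    A⁻¹ i i = 1 := by
  have hu := h.isUnit_det hdiag
  have h1 : (A * A⁻¹) i i = 1 := by rw [Matrix.mul_nonsing_inv A hu]; simp
  rw [Matrix.mul_apply] at h1
  rw [Finset.sum_eq_single i] at h1
  · rwa [hdiag, one_mul] at h1
  · intro k _ hk
    rcases lt_or_ge i k with hlt | hle
    · rw [h i k hlt, zero_mul]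
    · rw [(h.inv hdiag) k i (lt_of_le_of_ne hle hk), mul_zero]
  · simp

lemma posDef_submatrix {m : Type*} [Fintype m] [DecidableEq m]
    {M : Matrix (Fin d) (Fin d) ℝ} (hM : M.PosDef) (f : m → Fin d) (hf : Function.Injective f) :
    (M.submatrix f f).PosDef := by
  rw [posDef_iff_dotProduct_mulVec]
  constructor
  · have h1 := hM.1
    rw [Matrix.IsHermitian] at h1 ⊢
    rw [conjTranspose_submatrix, h1]
  · intro x hx
    set y : Fin d → ℝ := fun j => ∑ i, if f i = j then x i else 0 with hy
    have hsum : ∀ g : Fin d → ℝ, ∑ a, y a * g a = ∑ i, x i * g (f i) := by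
      intro g
      simp only [hy, Finset.sum_mul]
      rw [Finset.sum_comm]
      refine Finset.sum_congr rfl fun i _ => ?_
      rw [Finset.sum_eq_single (f i)] <;> simp +contextual [eq_comm]
    have hyx : ∀ i, y (f i) = x i := by
      intro i
      show (∑ j, if f j = f i then x j else 0) = x i
      rw [Finset.sum_eq_single i] <;> simp +contextual [hf.eq_iff]
    have hyne : y ≠ 0 := by
      intro h0
      apply hx
      funext i
      have := congrFun h0 (f i)
      rwa [hyx i] at this
    have := hM.dotProduct_mulVec_pos hyne
    have hconv : star x ⬝ᵥ (M.submatrix f f) *ᵥ x = star y ⬝ᵥ M *ᵥ y := by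
      simp only [dotProduct, mulVec, dotProduct, star, Pi.star_apply, star_trivial, id]
      rw [show ∑ a, y a * ∑ b, M a b * y b = ∑ i, x i * ∑ b, M (f i) b * y b from
        hsum (fun a => ∑ b, M a b * y b)]
      refine Finset.sum_congr rfl fun i _ => ?_
      congr 1
      simp only [submatrix_apply]
      have := hsum (fun b => M (f i) b)
      calc ∑ j, M (f i) (f j) * x j = ∑ j, x j * M (f i) (f j) := by
            exact Finset.sum_congr rfl fun j _ => mul_comm _ _
        _ = ∑ b, y b * M (f i) b := (hsum (fun b => M (f i) b)).symm
        _ = ∑ b, M (f i) b * y b := Finset.sum_congr rfl fun b _ => mul_comm _ _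
    rw [hconv]
    exact this




section
variable {Sig : Matrix (Fin d) (Fin d) ℝ}

lemma subm_posDef (hpd : Sig.PosDef) (S : Finset (Fin d)) :
    (Matrix.of fun a b : S => Sig a b).PosDef :=
  posDef_submatrix hpd (Subtype.val : S → Fin d) Subtype.val_injective

lemma subm_inv_mul (hpd : Sig.PosDef) (S : Finset (Fin d)) :
    (Matrix.of fun a b : S => Sig a b)⁻¹ * (Matrix.of fun a b : S => Sig a b) = 1 :=
  Matrix.nonsing_inv_mul _ (isUnit_iff_ne_zero.mpr (subm_posDef hpd S).det_pos.ne')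

/-- Normal equations: the conditional covariance with an element of the conditioning set is 0. -/
lemma condCov_eq_zero (hpd : Sig.PosDef) (S : Finset (Fin d)) (k : Fin d) {j : Fin d}
    (hj : j ∈ S) : condCov Sig S k j = 0 := by
  unfold condCov
  have key : ∀ a : S, ∑ b : S, (Matrix.of fun a b : S => Sig a b)⁻¹ a b * Sig b j
      = if a = (⟨j, hj⟩ : S) then 1 else 0 := by
    intro a
    have := congrFun (congrFun (subm_inv_mul hpd S) a) ⟨j, hj⟩
    rw [Matrix.mul_apply] at this
    rw [show (∑ b : S, (Matrix.of fun a b : S => Sig a b)⁻¹ a b * Sig b j) =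
      ∑ b : S, (Matrix.of fun a b : S => Sig a b)⁻¹ a b * (Matrix.of fun a b : S => Sig a b) b ⟨j, hj⟩
      from rfl, this, Matrix.one_apply]
  have : ∑ a : S, ∑ b : S, Sig k a * (Matrix.of fun a b : S => Sig a b)⁻¹ a b * Sig b j
      = ∑ a : S, Sig k a * (if a = (⟨j, hj⟩ : S) then 1 else 0) := by
    refine Finset.sum_congr rfl fun a _ => ?_
    rw [← key a, Finset.mul_sum]
    exact Finset.sum_congr rfl fun b _ => by ring
  rw [this]
  simp

/-- regression coefficients -/
noncomputable def regB (Sig : Matrix (Fin d) (Fin d) ℝ) : Matrix (Fin d) (Fin d) ℝ :=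
  fun k j => if h : j ∈ Finset.Iio k then
    ∑ a : (Finset.Iio k : Finset (Fin d)),
      Sig k a * (Matrix.of fun a b : (Finset.Iio k : Finset (Fin d)) => Sig a b)⁻¹ a ⟨j, h⟩
  else 0

lemma regB_eq_zero (k j : Fin d) (h : k ≤ j) : regB Sig k j = 0 := by
  unfold regB
  rw [dif_neg]
  simp [not_lt.mpr h]

lemma one_sub_regB_mul (hpd : Sig.PosDef) (k i : Fin d) :
    ((1 - regB Sig) * Sig) k i = condCov Sig (Finset.Iio k) k i := by
  rw [Matrix.sub_mul, Matrix.one_mul, Matrix.sub_apply]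
  unfold condCov
  congr 1
  rw [Matrix.mul_apply]
  have step1 : ∀ b : (Finset.Iio k : Finset (Fin d)), regB Sig k ↑b =
      ∑ a : (Finset.Iio k : Finset (Fin d)),
        Sig k a * (Matrix.of fun a b : (Finset.Iio k : Finset (Fin d)) => Sig a b)⁻¹ a b := by
    intro b
    unfold regB
    rw [dif_pos b.2]
  have step2 : ∑ a : (Finset.Iio k : Finset (Fin d)), ∑ b : (Finset.Iio k : Finset (Fin d)),
      Sig k a * (Matrix.of fun a b : (Finset.Iio k : Finset (Fin d)) => Sig a b)⁻¹ a b * Sig b i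
      = ∑ b : (Finset.Iio k : Finset (Fin d)), regB Sig k ↑b * Sig ↑b i := by
    rw [Finset.sum_comm]
    refine Finset.sum_congr rfl fun b _ => ?_
    rw [step1 b, Finset.sum_mul]
  rw [step2]
  rw [show (∑ b : (Finset.Iio k : Finset (Fin d)), regB Sig k ↑b * Sig ↑b i)
      = ∑ b ∈ Finset.Iio k, regB Sig k b * Sig b i from
    Finset.sum_attach _ (fun b => regB Sig k b * Sig b i)]
  refine (Finset.sum_subset (Finset.subset_univ _) ?_).symm
  intro j _ hj
  rw [regB_eq_zero k j (not_lt.mp (by simpa using hj)), zero_mul]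
lemma lo_one_sub_regB : Lo (1 - regB Sig) := by
  intro i j hij
  rw [Matrix.sub_apply, regB_eq_zero i j hij.le, Matrix.one_apply_ne hij.ne, sub_zero]

lemma diag_one_sub_regB (k : Fin d) : (1 - regB Sig) k k = 1 := by
  rw [Matrix.sub_apply, regB_eq_zero k k le_rfl, Matrix.one_apply_eq, sub_zero]

lemma M_eq_diagonal (hsym : Sig.IsSymm) (hpd : Sig.PosDef) :
    (1 - regB Sig) * Sig * (1 - regB Sig)ᵀ
      = Matrix.diagonal (fun k => condCov Sig (Finset.Iio k) k k) := by
  set T := 1 - regB Sig with hT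
  have entry : ∀ k l : Fin d, (T * Sig * Tᵀ) k l = ∑ i, condCov Sig (Finset.Iio k) k i * T l i := by
    intro k l
    rw [Matrix.mul_apply]
    refine Finset.sum_congr rfl fun i _ => ?_
    rw [Matrix.transpose_apply, one_sub_regB_mul hpd]
  have lower : ∀ k l : Fin d, l < k → (T * Sig * Tᵀ) k l = 0 := by
    intro k l hlk
    rw [entry k l]
    refine Finset.sum_eq_zero fun i _ => ?_
    rcases lt_or_ge i k with h | h
    · rw [condCov_eq_zero hpd _ k (Finset.mem_Iio.mpr h), zero_mul]
    · rw [hT, lo_one_sub_regB l i (lt_of_lt_of_le hlk h), mul_zero]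
  have diag : ∀ k : Fin d, (T * Sig * Tᵀ) k k = condCov Sig (Finset.Iio k) k k := by
    intro k
    rw [entry k k, Finset.sum_eq_single k]
    · rw [hT, diag_one_sub_regB, mul_one]
    · intro i _ hik
      rcases lt_or_ge i k with h | h
      · rw [condCov_eq_zero hpd _ k (Finset.mem_Iio.mpr h), zero_mul]
      · rw [hT, lo_one_sub_regB k i (lt_of_le_of_ne h (Ne.symm hik)), mul_zero]
    · simp
  have symm : (T * Sig * Tᵀ)ᵀ = T * Sig * Tᵀ := by
    rw [Matrix.transpose_mul, Matrix.transpose_mul, Matrix.transpose_transpose, hsym.eq,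
      Matrix.mul_assoc]
  ext k l
  rcases lt_trichotomy k l with h | h | h
  · have := congrFun (congrFun symm k) l
    rw [Matrix.transpose_apply] at this
    rw [← this, lower l k h, Matrix.diagonal_apply_ne _ h.ne]
  · subst h
    rw [diag k, Matrix.diagonal_apply_eq]
  · rw [lower k l h, Matrix.diagonal_apply_ne _ (ne_of_gt h)]

lemma Lo.mul_diag {P Q : Matrix (Fin d) (Fin d) ℝ} (hP : Lo P) (hQ : Lo Q) (i : Fin d) :
    (P * Q) i i = P i i * Q i i := by
  rw [Matrix.mul_apply, Finset.sum_eq_single i]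
  · intro j _ hji
    rcases lt_or_gt_of_ne hji with h | h
    · rw [hQ j i h, mul_zero]
    · rw [hP i j h, zero_mul]
  · simp

lemma key_iff (hsym : Sig.IsSymm) (hpd : Sig.PosDef) :
    (∃ (σ2 : ℝ) (B : Matrix (Fin d) (Fin d) ℝ), 0 < σ2 ∧ (∀ a b : Fin d, a ≤ b → B a b = 0) ∧
        Sig = σ2 • ((1 - B)⁻¹ * (1 - B)⁻¹ᵀ)) ↔
    (∃ σ2 : ℝ, 0 < σ2 ∧ ∀ k : Fin d, condCov Sig (Finset.Iio k) k k = σ2) := by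
  constructor
  · rintro ⟨σ2, B, hσ, hBlow, hSig⟩
    refine ⟨σ2, hσ, ?_⟩
    set T' : Matrix (Fin d) (Fin d) ℝ := 1 - regB Sig with hT'
    set T : Matrix (Fin d) (Fin d) ℝ := 1 - B with hT
    have hLoT : Lo T := fun i j hij => by
      rw [hT, Matrix.sub_apply, hBlow i j hij.le, Matrix.one_apply_ne hij.ne, sub_zero]
    have hdT : ∀ i, T i i = 1 := fun i => by
      rw [hT, Matrix.sub_apply, hBlow i i le_rfl, Matrix.one_apply_eq, sub_zero]
    have hLoL : Lo T⁻¹ := hLoT.inv hdT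
    have hdL : ∀ i, T⁻¹ i i = 1 := hLoT.inv_diag hdT
    set A : Matrix (Fin d) (Fin d) ℝ := T' * T⁻¹ with hA
    have hLoT' : Lo T' := lo_one_sub_regB
    have hLoA : Lo A := hLoT'.mul hLoL
    have hdA : ∀ i, A i i = 1 := fun i => by
      rw [hA, hLoT'.mul_diag hLoL, hT', diag_one_sub_regB, hdL, mul_one]
    have hDA : Matrix.diagonal (fun k => condCov Sig (Finset.Iio k) k k) = σ2 • (A * Aᵀ) := by
      calc Matrix.diagonal (fun k => condCov Sig (Finset.Iio k) k k)
          = T' * Sig * T'ᵀ := (M_eq_diagonal hsym hpd).symm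
        _ = T' * (σ2 • (T⁻¹ * T⁻¹ᵀ)) * T'ᵀ := by rw [← hSig]
        _ = σ2 • (A * Aᵀ) := by
            rw [hA]
            simp only [Matrix.transpose_mul, mul_smul_comm, smul_mul_assoc, Matrix.mul_assoc]
    have hentry : ∀ k l : Fin d, Matrix.diagonal
        (fun k => condCov Sig (Finset.Iio k) k k) k l = σ2 * ∑ j, A k j * A l j := by
      intro k l
      rw [hDA, Matrix.smul_apply, Matrix.mul_apply, smul_eq_mul]
      simp only [Matrix.transpose_apply]
    have haux : ∀ n : ℕ, ∀ k : Fin d, (k : ℕ) = n → ∀ l, l ≠ k → A k l = 0 := by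
      intro n
      induction n using Nat.strong_induction_on with
      | _ n ih =>
        intro k hk l hlk
        rcases lt_or_gt_of_ne hlk with h | h
        · have h0 := hentry k l
          rw [Matrix.diagonal_apply_ne _ (Ne.symm hlk)] at h0
          have hsum : ∑ j, A k j * A l j = A k l := by
            rw [Finset.sum_eq_single l]
            · rw [hdA l, mul_one]
            · intro j _ hjl
              have hln : (l : ℕ) < n := by rw [← hk]; exact Fin.lt_def.mp h
              rw [ih (l : ℕ) hln l rfl j hjl, mul_zero]
            · simp
          rw [hsum] at h0
          have := h0.symm
          rcases mul_eq_zero.mp this with h' | h'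
          · exact absurd h' hσ.ne'
          · exact h'
        · exact hLoA k l h
    intro k
    have h0 := hentry k k
    rw [Matrix.diagonal_apply_eq, Finset.sum_eq_single k] at h0
    · rw [hdA k, mul_one, mul_one] at h0
      exact h0
    · intro j _ hjk
      rw [haux (k : ℕ) k rfl j hjk, mul_zero]
    · simp
  · rintro ⟨σ2, hσ, hc⟩
    refine ⟨σ2, regB Sig, hσ, fun a b hab => regB_eq_zero a b hab, ?_⟩
    set T : Matrix (Fin d) (Fin d) ℝ := 1 - regB Sig with hT
    have hLo : Lo T := lo_one_sub_regB
    have hdiag : ∀ i, T i i = 1 := diag_one_sub_regB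
    have hu : IsUnit T.det := hLo.isUnit_det hdiag
    have huT : IsUnit Tᵀ.det := by rwa [Matrix.det_transpose]
    have hM : T * Sig * Tᵀ = σ2 • (1 : Matrix (Fin d) (Fin d) ℝ) := by
      rw [M_eq_diagonal hsym hpd]
      ext k l
      rcases eq_or_ne k l with h | h
      · subst h
        rw [Matrix.diagonal_apply_eq, hc k, Matrix.smul_apply, Matrix.one_apply_eq, smul_eq_mul,
          mul_one]
      · rw [Matrix.diagonal_apply_ne _ h, Matrix.smul_apply, Matrix.one_apply_ne h, smul_eq_mul,
          mul_zero]
    have h2 : T⁻¹ * (T * Sig * Tᵀ) * Tᵀ⁻¹ = Sig := by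
      rw [Matrix.mul_assoc T Sig Tᵀ, ← Matrix.mul_assoc T⁻¹ T (Sig * Tᵀ),
        Matrix.nonsing_inv_mul _ hu, Matrix.one_mul, Matrix.mul_assoc,
        Matrix.mul_nonsing_inv _ huT, Matrix.mul_one]
    rw [← h2, hM, mul_smul_comm, smul_mul_assoc, Matrix.mul_one, Matrix.transpose_nonsing_inv]

lemma decomp_submatrix {σ2 : ℝ} {B : Matrix (Fin d) (Fin d) ℝ} (π : Equiv.Perm (Fin d))
    (h : Sig = σ2 • ((1 - B)⁻¹ * (1 - B)⁻¹ᵀ)) :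
    Sig.submatrix π π = σ2 • ((1 - B.submatrix π π)⁻¹ * (1 - B.submatrix π π)⁻¹ᵀ) := by
  have h1 : (1 : Matrix (Fin d) (Fin d) ℝ).submatrix ⇑π ⇑π = 1 := Matrix.submatrix_one_equiv π
  have hsb : (1 - B).submatrix ⇑π ⇑π = 1 - B.submatrix ⇑π ⇑π := by
    ext a b
    simp only [Matrix.submatrix_apply, Matrix.sub_apply]
    congr 1
    exact congrFun (congrFun h1 a) b
  rw [h]
  have hmul : ((1 - B)⁻¹ * (1 - B)⁻¹ᵀ).submatrix ⇑π ⇑π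
      = (1 - B)⁻¹.submatrix ⇑π ⇑π * ((1 - B)⁻¹ᵀ).submatrix ⇑π ⇑π :=
    (Matrix.submatrix_mul_equiv _ _ _ π _).symm
  have hinv : (1 - B)⁻¹.submatrix ⇑π ⇑π = (1 - B.submatrix ⇑π ⇑π)⁻¹ := by
    rw [← hsb, ← Matrix.inv_submatrix_equiv (1 - B) π π]
  have htr : ((1 - B)⁻¹ᵀ).submatrix ⇑π ⇑π = ((1 - B.submatrix ⇑π ⇑π)⁻¹)ᵀ := by
    rw [← Matrix.transpose_submatrix, hinv]
  have hs : (σ2 • ((1 - B)⁻¹ * (1 - B)⁻¹ᵀ)).submatrix ⇑π ⇑π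
      = σ2 • (((1 - B)⁻¹ * (1 - B)⁻¹ᵀ).submatrix ⇑π ⇑π) := rfl
  rw [hs, hmul, hinv, htr]

lemma condCov_reindex (Sig : Matrix (Fin d) (Fin d) ℝ) (π : Equiv.Perm (Fin d))
    (S : Finset (Fin d)) (k i : Fin d) :
    condCov (Sig.submatrix ⇑π ⇑π) S k i = condCov Sig (S.image ⇑π) (π k) (π i) := by
  classical
  let e : {x // x ∈ S} ≃ {x // x ∈ S.image ⇑π} :=
    { toFun := fun a => ⟨π a, Finset.mem_image_of_mem ⇑π a.2⟩
      invFun := fun b => ⟨π.symm b, by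
        obtain ⟨a, ha, hab⟩ := Finset.mem_image.mp b.2
        rw [← hab]
        simpa using ha⟩
      left_inv := fun a => by simp
      right_inv := fun b => by simp }
  have hsub : (Matrix.of fun a b : S => (Sig.submatrix ⇑π ⇑π) a b)
      = (Matrix.of fun a b : S.image ⇑π => Sig a b).submatrix ⇑e ⇑e := rfl
  have hinv : (Matrix.of fun a b : S => (Sig.submatrix ⇑π ⇑π) a b)⁻¹
      = (Matrix.of fun a b : S.image ⇑π => Sig a b)⁻¹.submatrix ⇑e ⇑e := by
    rw [hsub, Matrix.inv_submatrix_equiv]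
  unfold condCov
  congr 1
  rw [hinv]
  refine Fintype.sum_equiv e _ _ fun a => ?_
  refine Fintype.sum_equiv e _ _ fun b => ?_
  simp only [Matrix.submatrix_apply, Matrix.of_apply, Equiv.symm_apply_apply]
  rfl
end

theorem stmt0 {d : ℕ} (hd : 1 ≤ d) (Sig : Matrix (Fin d) (Fin d) ℝ)
    (hsym : Sig.IsSymm) (hpd : Sig.PosDef) :
    (∃ (σ2 : ℝ) (π : Equiv.Perm (Fin d)) (B : Matrix (Fin d) (Fin d) ℝ),
        0 < σ2 ∧ IsStrictLowerWrt B π ∧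
        Sig = σ2 • ((1 - B)⁻¹ * (1 - B)⁻¹ᵀ)) ↔
    (∃ (σ2 : ℝ) (π : Equiv.Perm (Fin d)), 0 < σ2 ∧
        ∀ k : Fin d, condCov Sig ((Finset.Iio k).image π) (π k) (π k) = σ2) := by

  constructor
  · rintro ⟨σ2, π, B, hσ, hlow, hSig⟩
    have hsym' : (Sig.submatrix ⇑π ⇑π).IsSymm := by
      rw [Matrix.IsSymm, Matrix.transpose_submatrix, hsym.eq]
    have hpd' : (Sig.submatrix ⇑π ⇑π).PosDef := posDef_submatrix hpd ⇑π π.injective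
    obtain ⟨σ2', hσ', hc⟩ := (key_iff hsym' hpd').mp
      ⟨σ2, B.submatrix ⇑π ⇑π, hσ, fun a b hab => hlow a b hab, decomp_submatrix π hSig⟩
    exact ⟨σ2', π, hσ', fun k => by rw [← condCov_reindex]; exact hc k⟩
  · rintro ⟨σ2, π, hσ, hc⟩
    have hsym' : (Sig.submatrix ⇑π ⇑π).IsSymm := by
      rw [Matrix.IsSymm, Matrix.transpose_submatrix, hsym.eq]
    have hpd' : (Sig.submatrix ⇑π ⇑π).PosDef := posDef_submatrix hpd ⇑π π.injective
    obtain ⟨σ2', B', hσ', hlow', hSig'⟩ := (key_iff hsym' hpd').mpr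
      ⟨σ2, hσ, fun k => by rw [condCov_reindex]; exact hc k⟩
    refine ⟨σ2', π, B'.submatrix ⇑π.symm ⇑π.symm, hσ', ?_, ?_⟩
    · intro a b hab
      show B'.submatrix ⇑π.symm ⇑π.symm (π a) (π b) = 0
      rw [Matrix.submatrix_apply]
      simpa using hlow' a b hab
    · have := decomp_submatrix (Sig := Sig.submatrix ⇑π ⇑π) π.symm hSig'
      rw [Matrix.submatrix_submatrix] at this
      have hid : (Sig.submatrix (⇑π ∘ ⇑π.symm) (⇑π ∘ ⇑π.symm)) = Sig := by
        rw [Equiv.self_comp_symm, Matrix.submatrix_id_id]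
      rw [hid] at this
      exact this
end

section
/- Let d ≥ 1, let B ∈ ℝ^{d×d} satisfy B_{a,b} = 0 whenever a ≤ b (strictly lower triangular), let σ² > 0, and set Σ := σ² (I_d − B)^{-1} (I_d − B)^{-T}. Then for every k ∈ {1,…,d}, with S := {1,…,k−1}, one has Σ_{k,k|S} = σ²; in particular Σ_{1,1} = σ². -/
open Matrix Finset

set_option maxHeartbeats 1000000 in
theorem stmt1 {d : ℕ} (hd : 1 ≤ d) (B : Matrix (Fin d) (Fin d) ℝ)
    (hB : ∀ a b : Fin d, a ≤ b → B a b = 0) (σ2 : ℝ) (hσ2 : 0 < σ2)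
    (Sig : Matrix (Fin d) (Fin d) ℝ)
    (hSig : Sig = σ2 • ((1 - B)⁻¹ * (1 - B)⁻¹ᵀ)) :
    (∀ k : Fin d, condCov Sig (Finset.Iio k) k k = σ2) ∧
    Sig ⟨0, hd⟩ ⟨0, hd⟩ = σ2 := by
  set L : Matrix (Fin d) (Fin d) ℝ := 1 - B with hL
  have hLtri : L.BlockTriangular OrderDual.toDual := by
    intro i j hij
    have hij' : i < j := hij
    simp [hL, Matrix.sub_apply, Matrix.one_apply, hB i j hij'.le, hij'.ne]
  have hLdiag : ∀ i, L i i = 1 := by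
    intro i
    simp [hL, Matrix.sub_apply, Matrix.one_apply, hB i i le_rfl]
  have hLdet : L.det = 1 := by
    rw [Matrix.det_of_lowerTriangular L hLtri]
    simp [hLdiag]
  haveI : Invertible L := L.invertibleOfIsUnitDet (by rw [hLdet]; exact isUnit_one)
  set A : Matrix (Fin d) (Fin d) ℝ := L⁻¹ with hA
  have hAtri : A.BlockTriangular OrderDual.toDual :=
    Matrix.blockTriangular_inv_of_blockTriangular hLtri
  have hAlow : ∀ i j : Fin d, i < j → A i j = 0 := fun i j h => hAtri h
  have hLA : L * A = 1 := Matrix.mul_nonsing_inv L (by rw [hLdet]; exact isUnit_one)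
  have hAdiag : ∀ i, A i i = 1 := by
    intro i
    have h1 : (L * A) i i = 1 := by rw [hLA]; simp [Matrix.one_apply]
    rw [Matrix.mul_apply] at h1
    rw [Finset.sum_eq_single i] at h1
    · rw [hLdiag i, one_mul] at h1; exact h1
    · intro m _ hm
      rcases lt_or_gt_of_ne hm with h | h
      · rw [hAlow m i h, mul_zero]
      · rw [hLtri h, zero_mul]
    · intro h; exact absurd (Finset.mem_univ i) h
  have hSigE : ∀ i j, Sig i j = σ2 * ∑ m, A i m * A j m := by
    intro i j
    rw [hSig, Matrix.smul_apply, Matrix.mul_apply, smul_eq_mul]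
    congr 1
  -- main key lemma
  have key : ∀ k : Fin d, condCov Sig (Finset.Iio k) k k = σ2 := by
    intro k
    set N : Matrix (Finset.Iio k) (Finset.Iio k) ℝ :=
      Matrix.of (fun a b : Finset.Iio k => A a b) with hN
    have hmem : ∀ a : Finset.Iio k, (a : Fin d) < k := fun a => Finset.mem_Iio.mp a.2
    have hNtri : N.BlockTriangular OrderDual.toDual := by
      intro a b hab
      have : (a : Fin d) < b := hab
      exact hAlow a b this
    have hNdet : N.det = 1 := by
      rw [Matrix.det_of_lowerTriangular N hNtri]
      simp [hN, hAdiag]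
    have hNdetU : IsUnit N.det := by rw [hNdet]; exact isUnit_one
    have hNN : N * N⁻¹ = 1 := Matrix.mul_nonsing_inv N hNdetU
    have hNN' : N⁻¹ * N = 1 := Matrix.nonsing_inv_mul N hNdetU
    have hNTdetU : IsUnit Nᵀ.det := by rw [Matrix.det_transpose]; exact hNdetU
    have hNTN : Nᵀ * Nᵀ⁻¹ = 1 := Matrix.mul_nonsing_inv _ hNTdetU
    set u : (Finset.Iio k) → ℝ := fun m => A k m with hu
    -- Sᵢⱼ block
    have hblock : (Matrix.of fun a b : Finset.Iio k => Sig a b) = σ2 • (N * Nᵀ) := by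
      ext a b
      rw [Matrix.of_apply, hSigE, Matrix.smul_apply, Matrix.mul_apply, smul_eq_mul]
      congr 1
      trans (∑ m ∈ Finset.Iio k, A a m * A b m)
      · symm
        apply Finset.sum_subset (Finset.subset_univ _)
        intro m _ hm
        rw [Finset.mem_Iio] at hm
        have : (a : Fin d) < m := lt_of_lt_of_le (hmem a) (not_lt.mp hm)
        rw [hAlow a m this, zero_mul]
      · rw [← Finset.sum_coe_sort (Finset.Iio k) (fun m => A a m * A b m)]
        rfl
    -- inverse of the block
    have hinv : (Matrix.of fun a b : Finset.Iio k => Sig a b)⁻¹ = σ2⁻¹ • (Nᵀ⁻¹ * N⁻¹) := by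
      rw [hblock]
      apply Matrix.inv_eq_right_inv
      rw [Matrix.smul_mul, Matrix.mul_smul, smul_smul, mul_inv_cancel₀ hσ2.ne']
      rw [one_smul, Matrix.mul_assoc, ← Matrix.mul_assoc Nᵀ, hNTN, Matrix.one_mul, hNN]
    -- row
    have hrow : ∀ a : Finset.Iio k, Sig k a = σ2 * (N *ᵥ u) a := by
      intro a
      rw [hSigE, Matrix.mulVec, dotProduct]
      congr 1
      trans (∑ m ∈ Finset.Iio k, A k m * A a m)
      · symm
        apply Finset.sum_subset (Finset.subset_univ _)
        intro m _ hm
        rw [Finset.mem_Iio] at hm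
        have : (a : Fin d) < m := lt_of_lt_of_le (hmem a) (not_lt.mp hm)
        rw [hAlow a m this, mul_zero]
      · rw [← Finset.sum_coe_sort (Finset.Iio k) (fun m => A k m * A a m)]
        exact Finset.sum_congr rfl fun m _ => mul_comm _ _
    have hcol : ∀ b : Finset.Iio k, Sig b k = σ2 * (N *ᵥ u) b := by
      intro b
      rw [← hrow b, hSigE, hSigE]
      congr 1
      exact Finset.sum_congr rfl fun m _ => mul_comm _ _
    have hWv : (Nᵀ⁻¹ * N⁻¹) *ᵥ (N *ᵥ u) = Nᵀ⁻¹ *ᵥ u := by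
      rw [Matrix.mulVec_mulVec, Matrix.mul_assoc, hNN', Matrix.mul_one]
    have hvy : (N *ᵥ u) ⬝ᵥ (Nᵀ⁻¹ *ᵥ u) = u ⬝ᵥ u := by
      rw [dotProduct_comm, Matrix.dotProduct_mulVec, ← Matrix.transpose_nonsing_inv,
        Matrix.mulVec_transpose, Matrix.vecMul_vecMul, Matrix.nonsing_inv_mul N hNdetU,
        Matrix.vecMul_one]
    have hquad : (∑ a : Finset.Iio k, ∑ b : Finset.Iio k,
        Sig k a * (Matrix.of fun a b : Finset.Iio k => Sig a b)⁻¹ a b * Sig b k)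
        = σ2 * (u ⬝ᵥ u) := by
      rw [hinv]
      have hterm : ∀ a b : Finset.Iio k,
          Sig k ↑a * (σ2⁻¹ • (Nᵀ⁻¹ * N⁻¹)) a b * Sig ↑b k
          = σ2 * ((N *ᵥ u) a * ((Nᵀ⁻¹ * N⁻¹) a b * (N *ᵥ u) b)) := by
        intro a b
        rw [hrow, hcol, Matrix.smul_apply, smul_eq_mul]
        field_simp
      calc (∑ a : Finset.Iio k, ∑ b : Finset.Iio k,
            Sig k ↑a * (σ2⁻¹ • (Nᵀ⁻¹ * N⁻¹)) a b * Sig ↑b k)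
          = ∑ a : Finset.Iio k, ∑ b : Finset.Iio k,
            σ2 * ((N *ᵥ u) a * ((Nᵀ⁻¹ * N⁻¹) a b * (N *ᵥ u) b)) :=
            Finset.sum_congr rfl fun a _ => Finset.sum_congr rfl fun b _ => hterm a b
        _ = σ2 * ((N *ᵥ u) ⬝ᵥ ((Nᵀ⁻¹ * N⁻¹) *ᵥ (N *ᵥ u))) := by
            rw [dotProduct, Finset.mul_sum]
            refine Finset.sum_congr rfl fun a _ => ?_
            have hx : ((Nᵀ⁻¹ * N⁻¹) *ᵥ (N *ᵥ u)) a
                = ∑ b : Finset.Iio k, (Nᵀ⁻¹ * N⁻¹) a b * (N *ᵥ u) b := rfl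
            rw [hx, Finset.mul_sum, Finset.mul_sum]
        _ = σ2 * (u ⬝ᵥ u) := by rw [hWv, hvy]
    have hdiagk : Sig k k = σ2 * (u ⬝ᵥ u + 1) := by
      rw [hSigE]
      congr 1
      have h1 : ∑ m, A k m * A k m
          = (∑ m ∈ Finset.univ.erase k, A k m * A k m) + A k k * A k k :=
        (Finset.sum_erase_add Finset.univ _ (Finset.mem_univ k)).symm
      have h2 : (∑ m ∈ Finset.univ.erase k, A k m * A k m)
          = ∑ m ∈ Finset.Iio k, A k m * A k m := by
        symm
        apply Finset.sum_subset
        · intro m hm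
          exact Finset.mem_erase.mpr ⟨(Finset.mem_Iio.mp hm).ne, Finset.mem_univ m⟩
        · intro m hm hm'
          rw [Finset.mem_erase] at hm
          rw [Finset.mem_Iio] at hm'
          have : k < m := lt_of_le_of_ne (not_lt.mp hm') (Ne.symm hm.1)
          rw [hAlow k m this, zero_mul]
      rw [h1, h2, hAdiag, mul_one]
      congr 1
      rw [dotProduct, ← Finset.sum_coe_sort (Finset.Iio k) (fun m => A k m * A k m)]
    simp only [condCov]
    rw [hquad, hdiagk]
    ring
  refine ⟨key, ?_⟩
  have h := key ⟨0, hd⟩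
  haveI : IsEmpty (Finset.Iio (⟨0, hd⟩ : Fin d)) := by
    constructor
    intro a
    have h2 := Finset.mem_Iio.mp a.2
    exact absurd h2 (by simp [Fin.lt_def])
  simp only [condCov, Finset.univ_eq_empty, Finset.sum_empty, sub_zero] at h
  exact h
end

section
/- Let d ≥ 2, let B ∈ ℝ^{d×d} satisfy B_{a,b} = 0 whenever a ≤ b (strictly lower triangular), let σ² > 0, and set Σ := σ² (I_d − B)^{-1} (I_d − B)^{-T}. Fix indices 1 ≤ i < j ≤ d and let S := {1,…,i−1}. Then the (j,i) entry of (I_d − B)^{-1} (the total causal effect of node i on node j in the associated linear structural equation model) equals Σ_{j,i|S} · (Σ_{i,i|S})^{-1} = Σ_{j,i|S} / σ². -/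
open Matrix Finset

theorem stmt3 {d : ℕ} (hd : 2 ≤ d) (B : Matrix (Fin d) (Fin d) ℝ)
    (hB : ∀ a b : Fin d, a ≤ b → B a b = 0) (σ2 : ℝ) (hσ2 : 0 < σ2)
    (Sig : Matrix (Fin d) (Fin d) ℝ)
    (hSig : Sig = σ2 • ((1 - B)⁻¹ * (1 - B)⁻¹ᵀ))
    (i j : Fin d) (hij : i < j) :
    (1 - B)⁻¹ j i = condCov Sig (Finset.Iio i) j i / condCov Sig (Finset.Iio i) i i ∧
    (1 - B)⁻¹ j i = condCov Sig (Finset.Iio i) j i / σ2 := by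
  set C : Matrix (Fin d) (Fin d) ℝ := 1 - B with hCdef
  have hC : C.BlockTriangular OrderDual.toDual := by
    intro a b h
    have hab : (a : Fin d) < b := h
    simp only [hCdef, Matrix.sub_apply, Matrix.one_apply, hB a b hab.le, if_neg hab.ne]
    ring
  have hCdiag : ∀ a, C a a = 1 := by
    intro a; simp [hCdef, hB a a le_rfl]
  have hClow : ∀ a b : Fin d, a < b → C a b = 0 := fun a b h => hC (by exact h)
  have hdet : IsUnit C.det := by
    rw [Matrix.det_of_lowerTriangular C hC]; simp [hCdiag]
  haveI : Invertible C := C.invertibleOfIsUnitDet hdet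
  set A : Matrix (Fin d) (Fin d) ℝ := C⁻¹ with hAdef
  have hA : A.BlockTriangular OrderDual.toDual :=
    blockTriangular_inv_of_blockTriangular hC
  have hAlow : ∀ a b : Fin d, a < b → A a b = 0 := fun a b h => hA (by exact h)
  have hCA : C * A = 1 := Matrix.mul_nonsing_inv C hdet
  have hAC : A * C = 1 := Matrix.nonsing_inv_mul C hdet
  have hAdiag : ∀ a, A a a = 1 := by
    intro a
    have h1 : (C * A) a a = 1 := by rw [hCA]; simp
    rw [Matrix.mul_apply] at h1
    rw [Finset.sum_eq_single a] at h1
    · rw [hCdiag] at h1; linarith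
    · intro m _ hm
      rcases lt_or_gt_of_ne hm with h | h
      · rw [hAlow m a h, mul_zero]
      · rw [hClow a m h, zero_mul]
    · simp
  have hrestrict : ∀ f : Fin d → ℝ, (∀ m, ¬ m < i → f m = 0) →
      ∑ m : (Finset.Iio i : Finset (Fin d)), f ↑m = ∑ m : Fin d, f m := by
    intro f hf
    rw [Finset.sum_coe_sort (Finset.Iio i) f]
    exact Finset.sum_subset (Finset.subset_univ _)
      (fun m _ hm => hf m (by simpa using hm))
  have hmemT : ∀ m : (Finset.Iio i : Finset (Fin d)), (m : Fin d) < i :=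
    fun m => Finset.mem_Iio.mp m.2
  set AS : Matrix (Finset.Iio i : Finset (Fin d)) (Finset.Iio i : Finset (Fin d)) ℝ :=
    Matrix.of fun a b => A a b with hASdef
  set CS : Matrix (Finset.Iio i : Finset (Fin d)) (Finset.Iio i : Finset (Fin d)) ℝ :=
    Matrix.of fun a b => C a b with hCSdef
  set MS : Matrix (Finset.Iio i : Finset (Fin d)) (Finset.Iio i : Finset (Fin d)) ℝ :=
    Matrix.of fun a b => Sig a b with hMSdef
  have hCSAS : CS * AS = 1 := by
    ext a b
    rw [Matrix.mul_apply]
    have h1 : ∑ m : (Finset.Iio i : Finset (Fin d)), C ↑a ↑m * A ↑m ↑b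
        = ∑ m : Fin d, C ↑a m * A m ↑b := by
      exact hrestrict (fun m => C ↑a m * A m ↑b) (fun m hm => by
        show C ↑a m * A m ↑b = 0
        rw [hClow ↑a m (lt_of_lt_of_le (hmemT a) (not_lt.mp hm)), zero_mul])
    have h2 : (C * A) ↑a ↑b = (1 : Matrix (Fin d) (Fin d) ℝ) ↑a ↑b := by rw [hCA]
    rw [Matrix.mul_apply] at h2
    simp only [hCSdef, hASdef, Matrix.of_apply]
    rw [h1, h2, Matrix.one_apply, Matrix.one_apply]
    exact if_congr Subtype.ext_iff.symm rfl rfl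
  have hASCS : AS * CS = 1 := by
    ext a b
    rw [Matrix.mul_apply]
    have h1 : ∑ m : (Finset.Iio i : Finset (Fin d)), A ↑a ↑m * C ↑m ↑b
        = ∑ m : Fin d, A ↑a m * C m ↑b := by
      exact hrestrict (fun m => A ↑a m * C m ↑b) (fun m hm => by
        show A ↑a m * C m ↑b = 0
        rw [hAlow ↑a m (lt_of_lt_of_le (hmemT a) (not_lt.mp hm)), zero_mul])
    have h2 : (A * C) ↑a ↑b = (1 : Matrix (Fin d) (Fin d) ℝ) ↑a ↑b := by rw [hAC]
    rw [Matrix.mul_apply] at h2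
    simp only [hCSdef, hASdef, Matrix.of_apply]
    rw [h1, h2, Matrix.one_apply, Matrix.one_apply]
    exact if_congr Subtype.ext_iff.symm rfl rfl
  have hSigEntry : ∀ p q : Fin d, Sig p q = σ2 * ∑ m : Fin d, A p m * A q m := by
    intro p q
    rw [hSig]
    simp [Matrix.smul_apply, Matrix.mul_apply, Matrix.transpose_apply]
  have hMS : MS = σ2 • (AS * ASᵀ) := by
    ext a b
    simp only [hMSdef, hASdef, Matrix.of_apply, Matrix.smul_apply, Matrix.mul_apply,
      Matrix.transpose_apply, smul_eq_mul]
    rw [hSigEntry]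
    congr 1
    exact (hrestrict (fun m => A ↑a m * A ↑b m) (fun m hm => by
      show A ↑a m * A ↑b m = 0
      rw [hAlow ↑a m (lt_of_lt_of_le (hmemT a) (not_lt.mp hm)), zero_mul])).symm
  have hMSinv : MS⁻¹ = σ2⁻¹ • (CSᵀ * CS) := by
    apply Matrix.inv_eq_right_inv
    rw [hMS, smul_mul_assoc, mul_smul_comm, smul_smul,
      mul_inv_cancel₀ hσ2.ne', one_smul, mul_assoc, ← mul_assoc ASᵀ CSᵀ CS,
      ← Matrix.transpose_mul, hCSAS, Matrix.transpose_one, one_mul, hASCS]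
  have hcond : ∀ k : Fin d, condCov Sig (Finset.Iio i) k i = σ2 * A k i := by
    intro k
    have hDS : (∑ a : (Finset.Iio i : Finset (Fin d)), ∑ b, Sig k ↑a * MS⁻¹ a b * Sig ↑b i)
        = (fun a : (Finset.Iio i : Finset (Fin d)) => Sig k ↑a) ⬝ᵥ
          (MS⁻¹ *ᵥ fun b : (Finset.Iio i : Finset (Fin d)) => Sig ↑b i) := by
      simp only [dotProduct, Matrix.mulVec, dotProduct, Finset.mul_sum]
      exact Finset.sum_congr rfl fun a _ => Finset.sum_congr rfl fun b _ => by ring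
    have hu : (fun a : (Finset.Iio i : Finset (Fin d)) => Sig k ↑a)
        = σ2 • (AS *ᵥ fun m : (Finset.Iio i : Finset (Fin d)) => A k ↑m) := by
      funext a
      simp only [Pi.smul_apply, Matrix.mulVec, dotProduct, hASdef, Matrix.of_apply, smul_eq_mul]
      rw [hSigEntry]
      congr 1
      rw [← hrestrict (fun m => A k m * A ↑a m) (fun m hm => by
        show A k m * A ↑a m = 0
        rw [hAlow ↑a m (lt_of_lt_of_le (hmemT a) (not_lt.mp hm)), mul_zero])]
      exact Finset.sum_congr rfl fun m _ => by ring
    have hv : (fun b : (Finset.Iio i : Finset (Fin d)) => Sig ↑b i)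
        = σ2 • (AS *ᵥ fun m : (Finset.Iio i : Finset (Fin d)) => A i ↑m) := by
      funext b
      simp only [Pi.smul_apply, Matrix.mulVec, dotProduct, hASdef, Matrix.of_apply, smul_eq_mul]
      rw [hSigEntry]
      congr 1
      exact (hrestrict (fun m => A ↑b m * A i m) (fun m hm => by
        show A ↑b m * A i m = 0
        rw [hAlow ↑b m (lt_of_lt_of_le (hmemT b) (not_lt.mp hm)), zero_mul])).symm
    have hMv : MS⁻¹ *ᵥ (fun b : (Finset.Iio i : Finset (Fin d)) => Sig ↑b i)
        = CSᵀ *ᵥ fun m : (Finset.Iio i : Finset (Fin d)) => A i ↑m := by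
      rw [hv, hMSinv, Matrix.mulVec_smul, Matrix.smul_mulVec, smul_smul,
        mul_inv_cancel₀ hσ2.ne', one_smul, Matrix.mulVec_mulVec, mul_assoc,
        hCSAS, mul_one]
    have hfin : (fun a : (Finset.Iio i : Finset (Fin d)) => Sig k ↑a) ⬝ᵥ
        (CSᵀ *ᵥ fun m : (Finset.Iio i : Finset (Fin d)) => A i ↑m)
        = σ2 * ∑ m : (Finset.Iio i : Finset (Fin d)), A k ↑m * A i ↑m := by
      rw [hu, smul_dotProduct]
      congr 1
      rw [dotProduct_comm, Matrix.dotProduct_mulVec, Matrix.mulVec_transpose,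
        Matrix.vecMul_vecMul, hCSAS, Matrix.vecMul_one, dotProduct_comm]
      rfl
    have hsplit : ∑ m : Fin d, A k m * A i m
        = A k i + ∑ m : (Finset.Iio i : Finset (Fin d)), A k ↑m * A i ↑m := by
      rw [Finset.sum_coe_sort (Finset.Iio i) (fun m => A k m * A i m)]
      have h0 : ∀ m ∈ (Finset.univ : Finset (Fin d)), m ∉ insert i (Finset.Iio i) →
          A k m * A i m = 0 := by
        intro m _ hm
        simp only [Finset.mem_insert, Finset.mem_Iio, not_or, not_lt] at hm
        have him : i < m := lt_of_le_of_ne hm.2 (Ne.symm hm.1)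
        rw [hAlow i m him, mul_zero]
      rw [← Finset.sum_subset (Finset.subset_univ (insert i (Finset.Iio i))) h0,
        Finset.sum_insert (by simp), hAdiag i, mul_one]
    rw [condCov, ← hMSdef, hDS, hMv, hfin, hSigEntry k i, hsplit]
    ring
  constructor
  · rw [hcond j, hcond i, hAdiag i, mul_one]
    field_simp
  · rw [hcond j]
    field_simp
end

section
/- Let d ≥ 1 and let B₁, B₂ ∈ ℝ^{d×d} be such that each is strictly lower triangular with respect to some permutation of {1,…,d} (i.e., each has acyclic support), and let σ₁², σ₂² > 0. If σ₁² (I_d − B₁)^{-1} (I_d − B₁)^{-T} = σ₂² (I_d − B₂)^{-1} (I_d − B₂)^{-T}, then σ₁² = σ₂² and B₁ = B₂. In other words, a Gaussian linear structural equation model with equal error variances is identified by its covariance matrix: each covariance matrix of the model corresponds to a unique pair (B, σ²). -/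
open Matrix Finset

theorem key : ∀ (n : ℕ) (ι : Type) [Fintype ι] [DecidableEq ι],
    Fintype.card ι = n →
    ∀ (B₁ B₂ : Matrix ι ι ℝ) (f₁ f₂ : ι → ℕ),
    (∀ i j, f₁ i ≤ f₁ j → B₁ i j = 0) →
    (∀ i j, f₂ i ≤ f₂ j → B₂ i j = 0) →
    (1 - B₁)ᵀ * (1 - B₁) = (1 - B₂)ᵀ * (1 - B₂) → B₁ = B₂ := by
  intro n
  induction n using Nat.strong_induction_on with
  | _ n IH =>
  intro ι _ _ hcard B₁ B₂ f₁ f₂ h₁ h₂ heq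
  rcases Nat.eq_zero_or_pos n with hn | hn
  · haveI : IsEmpty ι := Fintype.card_eq_zero_iff.mp (hcard.trans hn)
    ext i j; exact isEmptyElim i
  haveI : Nonempty ι := Fintype.card_pos_iff.mp (hcard ▸ hn)
  obtain ⟨j, -, hj⟩ := Finset.exists_max_image Finset.univ f₁ univ_nonempty
  set A₁ := 1 - B₁ with hA₁
  set A₂ := 1 - B₂ with hA₂
  -- column j of B₁ is zero
  have hcol1 : ∀ i, B₁ i j = 0 := fun i => h₁ i j (hj i (mem_univ i))
  have hAcol1 : ∀ i, A₁ i j = if i = j then 1 else 0 := by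
    intro i
    simp [hA₁, Matrix.sub_apply, Matrix.one_apply, hcol1 i]
  -- diagonal entry of M at (j,j)
  have hMjj := congrFun (congrFun heq j) j
  simp only [Matrix.mul_apply, Matrix.transpose_apply] at hMjj
  have hL : ∑ i, A₁ i j * A₁ i j = 1 := by
    simp [hAcol1, Finset.sum_ite_eq', if_pos (mem_univ j)]
  have hA2jj : A₂ j j = 1 := by
    simp [hA₂, Matrix.sub_apply, Matrix.one_apply, h₂ j j le_rfl]
  have hsum2 : ∑ i ∈ univ.erase j, A₂ i j * A₂ i j = 0 := by
    have h' := Finset.add_sum_erase univ (fun i => A₂ i j * A₂ i j) (mem_univ j)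
    rw [← hMjj, hL, hA2jj] at h'
    linarith
  have hcol2 : ∀ i, A₂ i j = if i = j then 1 else 0 := by
    intro i
    by_cases hij : i = j
    · simp [hij, hA2jj]
    · simp only [if_neg hij]
      have := (Finset.sum_eq_zero_iff_of_nonneg (fun x _ => mul_self_nonneg (A₂ x j))).mp hsum2 i
        (Finset.mem_erase.mpr ⟨hij, mem_univ i⟩)
      exact mul_self_eq_zero.mp this
  -- row j of A₁ equals row j of A₂
  have hrow : ∀ k, A₁ j k = A₂ j k := by
    intro k
    have h := congrFun (congrFun heq j) k
    simp only [Matrix.mul_apply, Matrix.transpose_apply] at h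
    calc A₁ j k = ∑ i, A₁ i j * A₁ i k := by
          simp [hAcol1, Finset.sum_ite_eq', ite_mul]
      _ = ∑ i, A₂ i j * A₂ i k := h
      _ = A₂ j k := by simp [hcol2, Finset.sum_ite_eq', ite_mul]
  -- submatrix step
  have hcardS : Fintype.card {i : ι // i ≠ j} < n := by
    have : Fintype.card {i : ι // i ≠ j} = Fintype.card ι - 1 := by
      simp [Fintype.card_subtype_compl, Fintype.card_subtype_eq]
    omega
  have hsub : B₁.submatrix (fun (i : {i : ι // i ≠ j}) => i.1) (fun (i : {i : ι // i ≠ j}) => i.1)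
      = B₂.submatrix (fun (i : {i : ι // i ≠ j}) => i.1) (fun (i : {i : ι // i ≠ j}) => i.1) := by
    apply IH _ hcardS {i : ι // i ≠ j} rfl _ _ (f₁ ∘ Subtype.val) (f₂ ∘ Subtype.val)
      (fun a b hab => h₁ a.val b.val hab) (fun a b hab => h₂ a.val b.val hab)
    have hone : ∀ (B : Matrix ι ι ℝ), (1 - B.submatrix (fun (i : {i : ι // i ≠ j}) => i.1) (fun (i : {i : ι // i ≠ j}) => i.1))
        = (1 - B).submatrix (fun (i : {i : ι // i ≠ j}) => i.1) (fun (i : {i : ι // i ≠ j}) => i.1) := by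
      intro B
      ext a b
      simp [Matrix.sub_apply, Matrix.one_apply, Subtype.val_injective.eq_iff]
    show (1 - B₁.submatrix (fun (i : {i : ι // i ≠ j}) => i.1) (fun (i : {i : ι // i ≠ j}) => i.1))ᵀ
        * (1 - B₁.submatrix (fun (i : {i : ι // i ≠ j}) => i.1) (fun (i : {i : ι // i ≠ j}) => i.1))
        = (1 - B₂.submatrix (fun (i : {i : ι // i ≠ j}) => i.1) (fun (i : {i : ι // i ≠ j}) => i.1))ᵀ
        * (1 - B₂.submatrix (fun (i : {i : ι // i ≠ j}) => i.1) (fun (i : {i : ι // i ≠ j}) => i.1))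
    rw [hone, hone]
    ext a b
    simp only [Matrix.mul_apply, Matrix.transpose_apply, Matrix.submatrix_apply]
    have key2 : ∀ (A : Matrix ι ι ℝ), ∑ i : {i : ι // i ≠ j}, A i.val a.val * A i.val b.val
        = ∑ i ∈ univ.erase j, A i a.val * A i b.val := by
      intro A
      exact (Finset.sum_subtype (p := fun x => x ≠ j) (univ.erase j)
        (fun x => by simp) (fun i => A i a.val * A i b.val)).symm
    rw [key2, key2]
    have hfull : (∑ i, A₁ i a.val * A₁ i b.val) = ∑ i, A₂ i a.val * A₂ i b.val := by
      have := congrFun (congrFun heq a.val) b.val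
      simpa [Matrix.mul_apply, Matrix.transpose_apply] using this
    have t1 := Finset.add_sum_erase univ (fun i => A₁ i a.val * A₁ i b.val) (mem_univ j)
    have t2 := Finset.add_sum_erase univ (fun i => A₂ i a.val * A₂ i b.val) (mem_univ j)
    have hxy : A₁ j a.val * A₁ j b.val = A₂ j a.val * A₂ j b.val := by
      rw [hrow a.val, hrow b.val]
    linarith
  -- conclude
  ext i k
  by_cases hi : i = j
  · subst hi
    have := hrow k
    simp only [hA₁, hA₂, Matrix.sub_apply] at this
    linarith
  by_cases hk : k = j
  · subst hk
    rw [hcol1 i]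
    have := hcol2 i
    rw [if_neg hi] at this
    simp only [hA₂, Matrix.sub_apply, Matrix.one_apply, if_neg hi] at this
    linarith
  · exact congrFun (congrFun hsub ⟨i, hi⟩) ⟨k, hk⟩

theorem det_one_sub_strictLower {d : ℕ} (B : Matrix (Fin d) (Fin d) ℝ)
    (π : Equiv.Perm (Fin d)) (h : IsStrictLowerWrt B π) : (1 - B).det = 1 := by
  rw [← Matrix.det_submatrix_equiv_self π]
  have ht : ((1 - B).submatrix π π).BlockTriangular OrderDual.toDual := by
    intro a b hab
    have hab' : a < b := hab
    have hB : B (π a) (π b) = 0 := h a b hab'.le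
    have hne : π a ≠ π b := fun hc => absurd (π.injective hc) hab'.ne
    simp [Matrix.submatrix_apply, Matrix.sub_apply, Matrix.one_apply, hB, hne]
  rw [Matrix.det_of_lowerTriangular _ ht]
  apply Finset.prod_eq_one
  intro i _
  simp [Matrix.submatrix_apply, Matrix.sub_apply, Matrix.one_apply, h i i le_rfl]

theorem stmt5 {d : ℕ} (hd : 1 ≤ d) (B₁ B₂ : Matrix (Fin d) (Fin d) ℝ)
    (hB₁ : ∃ π : Equiv.Perm (Fin d), IsStrictLowerWrt B₁ π)
    (hB₂ : ∃ π : Equiv.Perm (Fin d), IsStrictLowerWrt B₂ π)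
    (σ1 σ2 : ℝ) (hσ1 : 0 < σ1) (hσ2 : 0 < σ2)
    (heq : σ1 • ((1 - B₁)⁻¹ * (1 - B₁)⁻¹ᵀ) = σ2 • ((1 - B₂)⁻¹ * (1 - B₂)⁻¹ᵀ)) :
    σ1 = σ2 ∧ B₁ = B₂ := by
  obtain ⟨π₁, h₁⟩ := hB₁
  obtain ⟨π₂, h₂⟩ := hB₂
  have hdet₁ : (1 - B₁).det = 1 := det_one_sub_strictLower B₁ π₁ h₁
  have hdet₂ : (1 - B₂).det = 1 := det_one_sub_strictLower B₂ π₂ h₂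
  have e1 : ∀ (A : Matrix (Fin d) (Fin d) ℝ) (σ : ℝ), 0 < σ → A.det = 1 →
      (σ • (A⁻¹ * A⁻¹ᵀ))⁻¹ = σ⁻¹ • (Aᵀ * A) := by
    intro A σ hσ hdet
    haveI : Invertible σ := invertibleOfNonzero hσ.ne'
    have hu : IsUnit A.det := hdet ▸ isUnit_one
    have hut : IsUnit Aᵀ.det := by rwa [Matrix.det_transpose]
    have hdprod : IsUnit (A⁻¹ * A⁻¹ᵀ).det := by
      rw [Matrix.det_mul, Matrix.det_transpose, Matrix.det_nonsing_inv, hdet]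
      simp
    rw [Matrix.inv_smul _ σ hdprod, Matrix.mul_inv_rev, Matrix.transpose_nonsing_inv,
      Matrix.nonsing_inv_nonsing_inv _ hut, Matrix.nonsing_inv_nonsing_inv _ hu,
      invOf_eq_inv]
  replace heq : (σ1 • ((1 - B₁)⁻¹ * (1 - B₁)⁻¹ᵀ))⁻¹ = (σ2 • ((1 - B₂)⁻¹ * (1 - B₂)⁻¹ᵀ))⁻¹ := by
    rw [heq]
  rw [e1 _ _ hσ1 hdet₁, e1 _ _ hσ2 hdet₂] at heq
  have hdeteq := congrArg Matrix.det heq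
  rw [Matrix.det_smul, Matrix.det_smul, Matrix.det_mul, Matrix.det_mul,
    Matrix.det_transpose, Matrix.det_transpose, hdet₁, hdet₂] at hdeteq
  simp only [Fintype.card_fin, mul_one] at hdeteq
  have hσ : σ1 = σ2 := by
    have := pow_left_inj₀ (le_of_lt (inv_pos.mpr hσ1)) (le_of_lt (inv_pos.mpr hσ2))
      (by omega : d ≠ 0) |>.mp hdeteq
    exact inv_injective this
  refine ⟨hσ, ?_⟩
  rw [hσ] at heq
  have hAA : (1 - B₁)ᵀ * (1 - B₁) = (1 - B₂)ᵀ * (1 - B₂) :=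
    smul_right_injective (Matrix (Fin d) (Fin d) ℝ) (inv_ne_zero hσ2.ne') heq
  refine key (Fintype.card (Fin d)) (Fin d) rfl B₁ B₂
    (fun i => (π₁.symm i : ℕ)) (fun i => (π₂.symm i : ℕ)) ?_ ?_ hAA
  · intro i j hij
    have := h₁ (π₁.symm i) (π₁.symm j) (by exact hij)
    simpa using this
  · intro i j hij
    have := h₂ (π₂.symm i) (π₂.symm j) (by exact hij)
    simpa using this
end

section
/- Let d ≥ 1 and let Σ̂ ∈ ℝ^{d×d} be symmetric positive definite. Over all matrices B ∈ ℝ^{d×d} with B_{a,b} = 0 whenever a ≤ b (strictly lower triangular), the function B ↦ tr((I_d − B)^T (I_d − B) Σ̂) attains its minimum uniquely at the matrix B̂ whose k-th row restricted to S_k := {1,…,k−1} equals (Σ̂_{S_k,S_k})^{-1} Σ̂_{S_k,k} (transposed) for each k, and the minimal value equals Σ_{k=1}^d Σ̂_{k,k|S_k}, the sum of the conditional variances of each coordinate given its predecessors. -/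
open Matrix Finset

/-- The least-squares coefficient matrix: the `k`-th row of `Bhat` restricted to
`{1,…,k-1}` is `(Σ̂_{S_k,S_k})⁻¹ Σ̂_{S_k,k}`, all other entries are zero. -/
noncomputable def Bhat {d : ℕ} (Shat : Matrix (Fin d) (Fin d) ℝ) :
    Matrix (Fin d) (Fin d) ℝ :=
  Matrix.of fun k p : Fin d =>
    if h : p < k then
      ∑ b : (Finset.Iio k),
        (Matrix.of fun a b : (Finset.Iio k) => Shat a b)⁻¹ ⟨p, Finset.mem_Iio.mpr h⟩ b
          * Shat b k
    else 0

namespace Stmt12Aux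

variable {d : ℕ}

lemma sum_Iio_eq (k : Fin d) (g : Fin d → ℝ) (hg : ∀ i : Fin d, ¬ i < k → g i = 0) :
    ∑ i, g i = ∑ i : (Finset.Iio k), g i := by
  rw [Finset.sum_coe_sort]
  exact (Finset.sum_subset (Finset.subset_univ _) (fun i _ hi => hg i (by simpa using hi))).symm

lemma subPD (Shat : Matrix (Fin d) (Fin d) ℝ) (hpd : Shat.PosDef) (k : Fin d) :
    (Matrix.of fun a b : (Finset.Iio k) => Shat a b).PosDef := by
  rw [Matrix.posDef_iff_dotProduct_mulVec]
  constructor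
  · ext a b
    simpa using congrFun (congrFun hpd.1 a.1) b.1
  · intro x hx
    set y : Fin d → ℝ := fun j => if h : j ∈ Finset.Iio k then x ⟨j, h⟩ else 0 with hy
    have hyne : y ≠ 0 := by
      obtain ⟨a, ha⟩ := Function.ne_iff.mp hx
      intro h
      apply ha
      have := congrFun h a.1
      simpa [hy, Finset.mem_Iio.mp a.2] using this
    have key : dotProduct (star x) ((Matrix.of fun a b : (Finset.Iio k) => Shat a b) *ᵥ x)
        = dotProduct (star y) (Shat *ᵥ y) := by
      simp only [dotProduct, Matrix.mulVec, star, id]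
      rw [sum_Iio_eq k (fun i => y i * ∑ j, Shat i j * y j)
        (by intro i hi; simp [hy, Finset.mem_Iio, hi])]
      refine Finset.sum_congr rfl fun a _ => ?_
      have h1 : y a.1 = x a := by simp [hy, Finset.mem_Iio.mp a.2]
      rw [h1]
      congr 1
      rw [sum_Iio_eq k (fun j => Shat a.1 j * y j)
        (by intro j hj; simp [hy, Finset.mem_Iio, hj])]
      refine Finset.sum_congr rfl fun b _ => ?_
      simp [hy, Finset.mem_Iio.mp b.2]
    rw [key]
    exact hpd.dotProduct_mulVec_pos hyne

lemma dot_symm (Shat : Matrix (Fin d) (Fin d) ℝ) (hsym : Shat.IsSymm) (u v : Fin d → ℝ) :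
    u ⬝ᵥ Shat *ᵥ v = v ⬝ᵥ Shat *ᵥ u := by
  rw [Matrix.dotProduct_mulVec, ← Matrix.mulVec_transpose, hsym.eq, dotProduct_comm]

lemma mulVec_hat (Shat : Matrix (Fin d) (Fin d) ℝ) (k s : Fin d) :
    Shat.mulVec (fun i => (1 - Bhat Shat) k i) s =
      Shat s k - ∑ i : (Finset.Iio k), Shat s i *
        ((Matrix.of fun a b : (Finset.Iio k) => Shat a b)⁻¹ *ᵥ (fun b => Shat b k)) i := by
  have h1 : Shat.mulVec (fun i => (1 - Bhat Shat) k i) s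
      = (∑ i, Shat s i * (1 : Matrix (Fin d) (Fin d) ℝ) k i)
        - ∑ i, Shat s i * Bhat Shat k i := by
    simp [Matrix.mulVec, dotProduct, Matrix.sub_apply, mul_sub, Finset.sum_sub_distrib]
  rw [h1]
  congr 1
  · simp [Matrix.one_apply, mul_ite, Finset.sum_ite_eq]
  · rw [sum_Iio_eq k (fun i => Shat s i * Bhat Shat k i)
      (by intro i hi; simp [Bhat, hi])]
    refine Finset.sum_congr rfl fun i _ => ?_
    have hik : (i : Fin d) < k := Finset.mem_Iio.mp i.2
    have : Bhat Shat k i = ((Matrix.of fun a b : (Finset.Iio k) => Shat a b)⁻¹ *ᵥ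
        (fun b => Shat b k)) i := by
      simp only [Bhat, Matrix.of_apply, dif_pos hik, Matrix.mulVec, dotProduct]
    rw [this]

lemma stat (Shat : Matrix (Fin d) (Fin d) ℝ) (hpd : Shat.PosDef) (k s : Fin d) (hs : s < k) :
    Shat.mulVec (fun i => (1 - Bhat Shat) k i) s = 0 := by
  rw [mulVec_hat]
  set A := (Matrix.of fun a b : (Finset.Iio k) => Shat a b) with hA
  have hinv : A * A⁻¹ = 1 := Matrix.mul_nonsing_inv _ (subPD Shat hpd k).det_pos.ne'.isUnit
  have : ∑ i : (Finset.Iio k), Shat s i * (A⁻¹ *ᵥ (fun b => Shat b k)) i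
      = (A *ᵥ (A⁻¹ *ᵥ (fun b => Shat b k))) ⟨s, Finset.mem_Iio.mpr hs⟩ := by
    simp [Matrix.mulVec, dotProduct, hA]
  rw [this, Matrix.mulVec_mulVec, hinv, Matrix.one_mulVec]
  simp

lemma sum3_comm (f : Fin d → Fin d → Fin d → ℝ) :
    ∑ x : Fin d, ∑ y : Fin d, ∑ z : Fin d, f x y z
      = ∑ z : Fin d, ∑ y : Fin d, ∑ x : Fin d, f x y z := by
  rw [show (∑ x : Fin d, ∑ y : Fin d, ∑ z : Fin d, f x y z)
      = ∑ x : Fin d, ∑ z : Fin d, ∑ y : Fin d, f x y z from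
    Finset.sum_congr rfl fun x _ => Finset.sum_comm, Finset.sum_comm]
  exact Finset.sum_congr rfl fun z _ => Finset.sum_comm

lemma trace_eq (C S : Matrix (Fin d) (Fin d) ℝ) :
    (Cᵀ * C * S).trace = ∑ k, (fun i => C k i) ⬝ᵥ S *ᵥ (fun i => C k i) := by
  simp only [Matrix.trace, Matrix.diag, Matrix.mul_apply, Matrix.transpose_apply,
    dotProduct, Matrix.mulVec, Finset.sum_mul, Finset.mul_sum]
  rw [sum3_comm]
  refine Finset.sum_congr rfl fun z _ => Finset.sum_congr rfl fun y _ =>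
    Finset.sum_congr rfl fun x _ => by ring

lemma row_decomp (Shat : Matrix (Fin d) (Fin d) ℝ) (hsym : Shat.IsSymm) (hpd : Shat.PosDef)
    (B : Matrix (Fin d) (Fin d) ℝ) (hB : ∀ a b : Fin d, a ≤ b → B a b = 0) (k : Fin d) :
    (fun i => (1 - B) k i) ⬝ᵥ Shat *ᵥ (fun i => (1 - B) k i)
      = (fun i => (1 - Bhat Shat) k i) ⬝ᵥ Shat *ᵥ (fun i => (1 - Bhat Shat) k i)
        + (fun i => Bhat Shat k i - B k i) ⬝ᵥ Shat *ᵥ (fun i => Bhat Shat k i - B k i) := by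
  set u : Fin d → ℝ := fun i => (1 - Bhat Shat) k i with hu
  set w : Fin d → ℝ := fun i => Bhat Shat k i - B k i with hw
  have hsplit : (fun i => (1 - B) k i) = u + w := by
    funext i; simp only [hu, hw, Matrix.sub_apply, Pi.add_apply]; ring
  have hcross : w ⬝ᵥ Shat *ᵥ u = 0 := by
    show ∑ i, w i * (Shat *ᵥ u) i = 0
    apply Finset.sum_eq_zero
    intro i _
    by_cases h : i < k
    · have h0 : (Shat *ᵥ u) i = 0 := stat Shat hpd k i h
      rw [h0, mul_zero]
    · have h1 : w i = 0 := by
        simp [hw, Bhat, h, hB k i (not_lt.mp h)]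
      rw [h1, zero_mul]
  have hcross' : u ⬝ᵥ Shat *ᵥ w = 0 := by rw [dot_symm Shat hsym]; exact hcross
  rw [hsplit, Matrix.mulVec_add, dotProduct_add, add_dotProduct, add_dotProduct,
    hcross, hcross']
  ring

lemma value (Shat : Matrix (Fin d) (Fin d) ℝ) (hpd : Shat.PosDef) (k : Fin d) :
    (fun i => (1 - Bhat Shat) k i) ⬝ᵥ Shat *ᵥ (fun i => (1 - Bhat Shat) k i)
      = condCov Shat (Finset.Iio k) k k := by
  set u : Fin d → ℝ := fun i => (1 - Bhat Shat) k i with hu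
  show ∑ i, u i * (Shat *ᵥ u) i = _
  rw [Finset.sum_eq_single k]
  · have huk : u k = 1 := by
      simp [hu, Matrix.sub_apply, Matrix.one_apply, Bhat]
    have hmk : (Shat *ᵥ u) k = Shat k k - ∑ i : (Finset.Iio k), Shat k i *
        ((Matrix.of fun a b : (Finset.Iio k) => Shat a b)⁻¹ *ᵥ (fun b => Shat b k)) i :=
      mulVec_hat Shat k k
    rw [huk, one_mul, hmk, condCov]
    congr 1
    refine Finset.sum_congr rfl fun a _ => ?_
    simp only [Matrix.mulVec, dotProduct, Finset.mul_sum]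
    exact Finset.sum_congr rfl fun b _ => by ring
  · intro i _ hne
    by_cases h : i < k
    · rw [show (Shat *ᵥ u) i = 0 from stat Shat hpd k i h, mul_zero]
    · have : u i = 0 := by
        simp [hu, Matrix.sub_apply, Matrix.one_apply, Bhat, h, (Ne.symm hne)]
      rw [this, zero_mul]
  · intro h; exact absurd (Finset.mem_univ k) h

end Stmt12Aux

theorem stmt12 {d : ℕ} (hd : 1 ≤ d) (Shat : Matrix (Fin d) (Fin d) ℝ)
    (hsym : Shat.IsSymm) (hpd : Shat.PosDef) :
    (∀ B : Matrix (Fin d) (Fin d) ℝ, (∀ a b : Fin d, a ≤ b → B a b = 0) →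
      ((1 - Bhat Shat)ᵀ * (1 - Bhat Shat) * Shat).trace ≤ ((1 - B)ᵀ * (1 - B) * Shat).trace) ∧
    (∀ B : Matrix (Fin d) (Fin d) ℝ, (∀ a b : Fin d, a ≤ b → B a b = 0) →
      ((1 - B)ᵀ * (1 - B) * Shat).trace = ((1 - Bhat Shat)ᵀ * (1 - Bhat Shat) * Shat).trace →
      B = Bhat Shat) ∧
    ((1 - Bhat Shat)ᵀ * (1 - Bhat Shat) * Shat).trace =
      ∑ k : Fin d, condCov Shat (Finset.Iio k) k k := by
  have htr : ∀ B : Matrix (Fin d) (Fin d) ℝ, (∀ a b : Fin d, a ≤ b → B a b = 0) →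
      ((1 - B)ᵀ * (1 - B) * Shat).trace
        = ((1 - Bhat Shat)ᵀ * (1 - Bhat Shat) * Shat).trace
          + ∑ k, (fun i => Bhat Shat k i - B k i) ⬝ᵥ Shat *ᵥ
              (fun i => Bhat Shat k i - B k i) := by
    intro B hB
    rw [Stmt12Aux.trace_eq, Stmt12Aux.trace_eq, ← Finset.sum_add_distrib]
    exact Finset.sum_congr rfl fun k _ => Stmt12Aux.row_decomp Shat hsym hpd B hB k
  have hnn : ∀ (B : Matrix (Fin d) (Fin d) ℝ) (k : Fin d),
      0 ≤ (fun i => Bhat Shat k i - B k i) ⬝ᵥ Shat *ᵥ (fun i => Bhat Shat k i - B k i) :=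
    fun B k => by simpa using hpd.posSemidef.dotProduct_mulVec_nonneg (fun i => Bhat Shat k i - B k i)
  refine ⟨fun B hB => ?_, fun B hB heq => ?_, ?_⟩
  · rw [htr B hB]
    exact le_add_of_nonneg_right (Finset.sum_nonneg fun k _ => hnn B k)
  · have h0 : ∑ k, (fun i => Bhat Shat k i - B k i) ⬝ᵥ Shat *ᵥ
        (fun i => Bhat Shat k i - B k i) = 0 := by
      have := htr B hB
      rw [heq] at this
      linarith
    have hk0 : ∀ k : Fin d, (fun i => Bhat Shat k i - B k i) ⬝ᵥ Shat *ᵥ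
        (fun i => Bhat Shat k i - B k i) = 0 := by
      intro k
      exact (Finset.sum_eq_zero_iff_of_nonneg fun k _ => hnn B k).mp h0 k (Finset.mem_univ k)
    ext k i
    by_contra hne
    have hwne : (fun i => Bhat Shat k i - B k i) ≠ 0 := by
      intro h
      have := congrFun h i
      simp only [Pi.zero_apply] at this
      apply hne
      linarith
    have := hpd.dotProduct_mulVec_pos hwne
    simp only [star_trivial] at this
    rw [hk0 k] at this
    exact lt_irrefl _ this
  · rw [Stmt12Aux.trace_eq]
    exact Finset.sum_congr rfl fun k _ => Stmt12Aux.value Shat hpd k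
end

section
/- Let d ≥ 2, fix indices 1 ≤ i < j ≤ d and ψ ∈ ℝ, and consider the map f_ψ from the open set of symmetric positive definite d×d matrices to ℝ^d whose first component is Σ ↦ Σ_{j,i|{1,…,i−1}} − ψ Σ_{1,1} and whose k-th component (k = 2,…,d) is Σ ↦ Σ_{k,k|{1,…,k−1}} − Σ_{1,1}. Then f_ψ is differentiable and its Fréchet derivative at every symmetric positive definite Σ, viewed as a linear map from the space of symmetric d×d matrices to ℝ^d, is surjective (i.e., the Jacobian of f_ψ has full rank d). -/
open Matrix Finset

attribute [local instance] Matrix.normedAddCommGroup Matrix.normedSpace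

/-- The defining map `f_ψ` of the hypothesis `M_ψ(G)` for the complete DAG with
ordering `(1, …, d)`: first component `Σ_{j,i|{1,…,i-1}} - ψ Σ_{1,1}`, `k`-th component
(`k = 2, …, d`) `Σ_{k,k|{1,…,k-1}} - Σ_{1,1}`. -/
noncomputable def fpsi {n : ℕ} (i j : Fin (n + 2)) (ψ : ℝ)
    (Sig : Matrix (Fin (n + 2)) (Fin (n + 2)) ℝ) : Fin (n + 2) → ℝ :=
  fun k =>
    if k = 0 then condCov Sig (Finset.Iio i) j i - ψ * Sig 0 0
    else condCov Sig (Finset.Iio k) k k - Sig 0 0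

section Aux

variable {d : ℕ}

lemma diff_entry (p q : Fin d) :
    Differentiable ℝ (fun M : Matrix (Fin d) (Fin d) ℝ => M p q) :=
  differentiable_pi.mp (differentiable_pi.mp differentiable_id p) q

lemma diff_det {m : Type*} [Fintype m] [DecidableEq m]
    (A : Matrix (Fin d) (Fin d) ℝ → Matrix m m ℝ) {x : Matrix (Fin d) (Fin d) ℝ}
    (h : ∀ p q, DifferentiableAt ℝ (fun M => A M p q) x) :
    DifferentiableAt ℝ (fun M => (A M).det) x := by
  simp only [Matrix.det_apply']
  refine DifferentiableAt.fun_sum fun σ _ => DifferentiableAt.const_mul ?_ _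
  exact (HasFDerivAt.finset_prod (u := Finset.univ) (g := fun p M => A M (σ p) p)
    (fun p _ => (h (σ p) p).hasFDerivAt)).differentiableAt

lemma posdef_submatrix {M : Matrix (Fin d) (Fin d) ℝ} (hM : M.PosDef)
    {m : Type*} [Fintype m] [DecidableEq m] (e : m → Fin d) (he : Function.Injective e) :
    (M.submatrix e e).PosDef := by
  refine PosDef.of_dotProduct_mulVec_pos (hM.posSemidef.submatrix e).1 fun x hx => ?_
  set y : Fin d → ℝ := fun p => ∑ a, if e a = p then x a else 0 with hy
  have key1 : ∀ g : Fin d → ℝ, ∑ p, y p * g p = ∑ a, x a * g (e a) := by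
    intro g
    calc ∑ p, y p * g p = ∑ p, ∑ a, (if e a = p then x a * g p else 0) := by
          simp [hy, Finset.sum_mul, ite_mul]
      _ = ∑ a, ∑ p, (if e a = p then x a * g p else 0) := Finset.sum_comm
      _ = ∑ a, x a * g (e a) := by simp
  have key2 : ∀ g : Fin d → ℝ, ∑ q, g q * y q = ∑ b, g (e b) * x b := by
    intro g
    calc ∑ q, g q * y q = ∑ q, ∑ b, (if e b = q then g q * x b else 0) := by
          simp [hy, Finset.mul_sum, mul_ite]
      _ = ∑ b, ∑ q, (if e b = q then g q * x b else 0) := Finset.sum_comm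
      _ = ∑ b, g (e b) * x b := by simp
  have hy0 : y ≠ 0 := by
    intro h
    apply hx
    funext a
    have h2 := congrFun h (e a)
    have h3 : y (e a) = x a := by
      simp only [hy, he.eq_iff]
      simp
    rw [h3] at h2
    exact h2
  have key : star x ⬝ᵥ (M.submatrix e e) *ᵥ x = star y ⬝ᵥ M *ᵥ y := by
    simp only [dotProduct, mulVec, star_trivial, Pi.star_apply, submatrix_apply]
    rw [key1 fun p => ∑ q, M p q * y q]
    refine Finset.sum_congr rfl fun a _ => ?_
    rw [key2 fun q => M (e a) q]
  rw [key]
  exact hM.dotProduct_mulVec_pos hy0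

lemma det_principal_ne {Sig : Matrix (Fin d) (Fin d) ℝ} (hpd : Sig.PosDef)
    (S : Finset (Fin d)) : (Matrix.of fun a b : S => Sig a b).det ≠ 0 := by
  have h := (posdef_submatrix hpd (fun a : S => (a : Fin d))
    Subtype.val_injective).det_pos
  exact h.ne'

lemma diff_inv_entry {Sig : Matrix (Fin d) (Fin d) ℝ} (S : Finset (Fin d))
    (hdet : (Matrix.of fun a b : S => Sig a b).det ≠ 0) (a b : S) :
    DifferentiableAt ℝ
      (fun M : Matrix (Fin d) (Fin d) ℝ => (Matrix.of fun p q : S => M p q)⁻¹ a b) Sig := by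
  have hent : ∀ p q : S, DifferentiableAt ℝ
      (fun M : Matrix (Fin d) (Fin d) ℝ => (Matrix.of fun r s : S => M r s) p q) Sig :=
    fun p q => (diff_entry (p : Fin d) (q : Fin d)) Sig
  simp only [Matrix.inv_def, Ring.inverse_eq_inv', Matrix.smul_apply, smul_eq_mul,
    Matrix.adjugate_apply]
  refine DifferentiableAt.mul (DifferentiableAt.inv ?_ hdet) ?_
  · exact diff_det _ hent
  · refine diff_det (fun M : Matrix (Fin d) (Fin d) ℝ =>
      ((Matrix.of fun r s : S => M r s).updateRow b (Pi.single a 1))) ?_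
    intro p q
    by_cases hp : p = b
    · simp [Matrix.updateRow_apply, hp]
    · simpa [Matrix.updateRow_apply, hp] using hent p q

lemma diff_condCov {Sig : Matrix (Fin d) (Fin d) ℝ} (S : Finset (Fin d))
    (hdet : (Matrix.of fun a b : S => Sig a b).det ≠ 0) (k i : Fin d) :
    DifferentiableAt ℝ (fun M => condCov M S k i) Sig := by
  unfold condCov
  refine DifferentiableAt.sub ((diff_entry k i) Sig) ?_
  refine DifferentiableAt.fun_sum fun a _ => DifferentiableAt.fun_sum fun b _ => ?_
  exact (((diff_entry k a) Sig).mul (diff_inv_entry S hdet a b)).mul ((diff_entry b i) Sig)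

lemma condCov_add_smul (M H : Matrix (Fin d) (Fin d) ℝ) (S : Finset (Fin d)) (k i : Fin d)
    (h1 : ∀ a ∈ S, H k a = 0) (h2 : ∀ b ∈ S, H b i = 0)
    (h3 : ∀ a ∈ S, ∀ b ∈ S, H a b = 0) (t : ℝ) :
    condCov (M + t • H) S k i = condCov M S k i + t * H k i := by
  unfold condCov
  have h4 : (Matrix.of fun a b : S => (M + t • H) a b) = (Matrix.of fun a b : S => M a b) := by
    ext a b
    simp [Matrix.add_apply, Matrix.smul_apply, h3 a a.2 b b.2]
  have h5 : ∀ a b : S,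
      (M + t • H) k a * (Matrix.of fun a b : S => (M + t • H) a b)⁻¹ a b * (M + t • H) b i
      = M k a * (Matrix.of fun a b : S => M a b)⁻¹ a b * M b i := by
    intro a b
    rw [h4]
    simp [Matrix.add_apply, Matrix.smul_apply, h1 a a.2, h2 b b.2]
  have h6 : ∀ a : S, (∑ b : S,
      (M + t • H) k a * (Matrix.of fun a b : S => (M + t • H) a b)⁻¹ a b * (M + t • H) b i)
      = ∑ b : S, M k a * (Matrix.of fun a b : S => M a b)⁻¹ a b * M b i :=
    fun a => Finset.sum_congr rfl fun b _ => h5 a b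
  rw [Finset.sum_congr rfl fun a _ => h6 a]
  simp [Matrix.add_apply, Matrix.smul_apply]
  ring

lemma fderiv_line {g : Matrix (Fin d) (Fin d) ℝ → ℝ} {Sig H : Matrix (Fin d) (Fin d) ℝ}
    (hg : DifferentiableAt ℝ g Sig) {c r : ℝ}
    (hl : ∀ t : ℝ, g (Sig + t • H) = c + t * r) :
    fderiv ℝ g Sig H = r := by
  have h1 : HasDerivAt (fun t : ℝ => Sig + t • H) H 0 := by
    have := ((hasDerivAt_id' (0 : ℝ)).smul_const H).const_add Sig
    rw [one_smul] at this
    exact this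
  have h0 : Sig + (0 : ℝ) • H = Sig := by simp
  have h2 : HasDerivAt (fun t : ℝ => g (Sig + t • H)) (fderiv ℝ g Sig H) 0 := by
    have := (h0 ▸ hg.hasFDerivAt).comp_hasDerivAt 0 h1
    rw [h0] at this
    exact this
  have h3 : HasDerivAt (fun t : ℝ => c + t * r) r 0 := by
    simpa using ((hasDerivAt_id (0 : ℝ)).mul_const r).const_add c
  rw [funext hl] at h2
  exact h2.unique h3

end Aux

section Main

variable {n : ℕ}

/-- Perturbation directions: `Bmat i j 0 = E_{ji} + E_{ij}`, `Bmat i j k = E_{kk}` else. -/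
noncomputable def Bmat (i j k : Fin (n + 2)) : Matrix (Fin (n + 2)) (Fin (n + 2)) ℝ :=
  if k = 0 then Matrix.single j i 1 + Matrix.single i j 1 else Matrix.single k k 1

lemma diff_fpsi_comp (i j : Fin (n + 2)) (ψ : ℝ) {Sig : Matrix (Fin (n + 2)) (Fin (n + 2)) ℝ}
    (hpd : Sig.PosDef) (m : Fin (n + 2)) :
    DifferentiableAt ℝ (fun M => fpsi i j ψ M m) Sig := by
  by_cases hm : m = 0
  · have h : (fun M => fpsi i j ψ M m)
        = fun M : Matrix (Fin (n + 2)) (Fin (n + 2)) ℝ =>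
          condCov M (Finset.Iio i) j i - ψ * M 0 0 := by
      funext M; simp [fpsi, hm]
    rw [h]
    exact (diff_condCov _ (det_principal_ne hpd _) j i).sub
      (((diff_entry 0 0) Sig).const_mul ψ)
  · have h : (fun M => fpsi i j ψ M m)
        = fun M : Matrix (Fin (n + 2)) (Fin (n + 2)) ℝ =>
          condCov M (Finset.Iio m) m m - M 0 0 := by
      funext M; simp [fpsi, hm]
    rw [h]
    exact (diff_condCov _ (det_principal_ne hpd _) m m).sub ((diff_entry 0 0) Sig)

end Main

section Facts

variable {n : ℕ}

/-- The directional derivative of the `m`-th component of `fpsi` in direction `Bmat i j k`. -/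
noncomputable def Lval (i j : Fin (n + 2)) (ψ : ℝ) (Sig : Matrix (Fin (n + 2)) (Fin (n + 2)) ℝ)
    (m k : Fin (n + 2)) : ℝ :=
  fderiv ℝ (fun M => fpsi i j ψ M m) Sig (Bmat i j k)

lemma std_ne (p q a b : Fin (n + 2)) (h : ¬(p = a ∧ q = b)) :
    Matrix.single p q (1 : ℝ) a b = 0 :=
  Matrix.single_apply_of_ne _ _ _ _ _ h

lemma Lval_diag (i j : Fin (n + 2)) (ψ : ℝ) {Sig : Matrix (Fin (n + 2)) (Fin (n + 2)) ℝ}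
    (hpd : Sig.PosDef) (k m : Fin (n + 2)) (hk : k ≠ 0) (hm : m ≠ 0)
    (hmk : (m : ℕ) ≤ (k : ℕ)) :
    Lval i j ψ Sig m k = if k = m then 1 else 0 := by
  have hkk : (k : ℕ) ≠ 0 := by
    exact fun h => hk (Fin.ext (by rw [h, Fin.val_zero]))
  have hB : Bmat i j k = Matrix.single k k 1 := by simp [Bmat, hk]
  unfold Lval
  rw [hB]
  refine fderiv_line (diff_fpsi_comp i j ψ hpd m)
    (c := condCov Sig (Finset.Iio m) m m - Sig 0 0) ?_
  intro t
  have h1 : ∀ a ∈ Finset.Iio m, Matrix.single k k (1 : ℝ) m a = 0 := by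
    intro a ha
    rw [Finset.mem_Iio, Fin.lt_def] at ha
    refine std_ne _ _ _ _ ?_
    rintro ⟨e1, e2⟩
    rw [Fin.ext_iff] at e1 e2
    omega
  have h2 : ∀ b ∈ Finset.Iio m, Matrix.single k k (1 : ℝ) b m = 0 := by
    intro b hb
    rw [Finset.mem_Iio, Fin.lt_def] at hb
    refine std_ne _ _ _ _ ?_
    rintro ⟨e1, e2⟩
    rw [Fin.ext_iff] at e1 e2
    omega
  have h3 : ∀ a ∈ Finset.Iio m, ∀ b ∈ Finset.Iio m, Matrix.single k k (1 : ℝ) a b = 0 := by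
    intro a ha b hb
    rw [Finset.mem_Iio, Fin.lt_def] at ha hb
    refine std_ne _ _ _ _ ?_
    rintro ⟨e1, e2⟩
    rw [Fin.ext_iff] at e1 e2
    omega
  show fpsi i j ψ (Sig + t • Matrix.single k k 1) m = _
  simp only [fpsi, if_neg hm]
  rw [condCov_add_smul Sig _ _ _ _ h1 h2 h3 t]
  have e1 : Matrix.single k k (1 : ℝ) m m = if k = m then 1 else 0 := by
    by_cases h : k = m
    · subst h; simp
    · rw [if_neg h]
      exact std_ne _ _ _ _ (fun hc => h hc.1)
  have e2 : Matrix.single k k (1 : ℝ) 0 0 = 0 :=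
    std_ne _ _ _ _ (fun hc => hk hc.1)
  simp only [Matrix.add_apply, Matrix.smul_apply, smul_eq_mul, e1, e2, if_true]
  ring

end Facts

section Facts2

variable {n : ℕ}

lemma Lval_row0 (i j : Fin (n + 2)) (hij : i < j) (ψ : ℝ)
    {Sig : Matrix (Fin (n + 2)) (Fin (n + 2)) ℝ} (hpd : Sig.PosDef)
    (k : Fin (n + 2)) (hk : k ≠ 0) (hik : (i : ℕ) ≤ (k : ℕ)) :
    Lval i j ψ Sig 0 k = 0 := by
  have hij' : (i : ℕ) < (j : ℕ) := hij
  have hkk : (k : ℕ) ≠ 0 := by exact fun h => hk (Fin.ext (by rw [h, Fin.val_zero]))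
  have hB : Bmat i j k = Matrix.single k k 1 := by simp [Bmat, hk]
  unfold Lval
  rw [hB]
  refine fderiv_line (diff_fpsi_comp i j ψ hpd 0)
    (c := condCov Sig (Finset.Iio i) j i - ψ * Sig 0 0) ?_
  intro t
  have h1 : ∀ a ∈ Finset.Iio i, Matrix.single k k (1 : ℝ) j a = 0 := by
    intro a ha
    rw [Finset.mem_Iio, Fin.lt_def] at ha
    refine std_ne _ _ _ _ ?_
    rintro ⟨e1, e2⟩
    rw [Fin.ext_iff] at e1 e2
    omega
  have h2 : ∀ b ∈ Finset.Iio i, Matrix.single k k (1 : ℝ) b i = 0 := by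
    intro b hb
    rw [Finset.mem_Iio, Fin.lt_def] at hb
    refine std_ne _ _ _ _ ?_
    rintro ⟨e1, e2⟩
    rw [Fin.ext_iff] at e1 e2
    omega
  have h3 : ∀ a ∈ Finset.Iio i, ∀ b ∈ Finset.Iio i, Matrix.single k k (1 : ℝ) a b = 0 := by
    intro a ha b hb
    rw [Finset.mem_Iio, Fin.lt_def] at ha hb
    refine std_ne _ _ _ _ ?_
    rintro ⟨e1, e2⟩
    rw [Fin.ext_iff] at e1 e2
    omega
  show fpsi i j ψ (Sig + t • Matrix.single k k 1) 0 = _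
  simp only [fpsi, if_pos rfl]
  rw [condCov_add_smul Sig _ _ _ _ h1 h2 h3 t]
  have e1 : Matrix.single k k (1 : ℝ) j i = 0 := by
    refine std_ne _ _ _ _ ?_
    rintro ⟨f1, f2⟩
    rw [Fin.ext_iff] at f1 f2
    omega
  have e2 : Matrix.single k k (1 : ℝ) 0 0 = 0 :=
    std_ne _ _ _ _ (fun hc => hk hc.1)
  simp only [Matrix.add_apply, Matrix.smul_apply, smul_eq_mul, e1, e2, if_true]
  ring

lemma Lval_00 (i j : Fin (n + 2)) (hij : i < j) (ψ : ℝ)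
    {Sig : Matrix (Fin (n + 2)) (Fin (n + 2)) ℝ} (hpd : Sig.PosDef) :
    Lval i j ψ Sig 0 0 = 1 := by
  have hij' : (i : ℕ) < (j : ℕ) := hij
  have hB : Bmat i j 0 = Matrix.single j i 1 + Matrix.single i j 1 := by simp [Bmat]
  unfold Lval
  rw [hB]
  set H0 : Matrix (Fin (n + 2)) (Fin (n + 2)) ℝ :=
    Matrix.single j i 1 + Matrix.single i j 1 with hH0
  refine fderiv_line (diff_fpsi_comp i j ψ hpd 0)
    (c := condCov Sig (Finset.Iio i) j i - ψ * Sig 0 0) ?_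
  intro t
  have hent : ∀ a b : Fin (n + 2), ¬(j = a ∧ i = b) → ¬(i = a ∧ j = b) → H0 a b = 0 := by
    intro a b hx hy
    rw [hH0, Matrix.add_apply, std_ne _ _ _ _ hx, std_ne _ _ _ _ hy, add_zero]
  have h1 : ∀ a ∈ Finset.Iio i, H0 j a = 0 := by
    intro a ha
    rw [Finset.mem_Iio, Fin.lt_def] at ha
    refine hent _ _ ?_ ?_ <;> rintro ⟨e1, e2⟩ <;> rw [Fin.ext_iff] at e1 e2 <;> omega
  have h2 : ∀ b ∈ Finset.Iio i, H0 b i = 0 := by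
    intro b hb
    rw [Finset.mem_Iio, Fin.lt_def] at hb
    refine hent _ _ ?_ ?_ <;> rintro ⟨e1, e2⟩ <;> rw [Fin.ext_iff] at e1 e2 <;> omega
  have h3 : ∀ a ∈ Finset.Iio i, ∀ b ∈ Finset.Iio i, H0 a b = 0 := by
    intro a ha b hb
    rw [Finset.mem_Iio, Fin.lt_def] at ha hb
    refine hent _ _ ?_ ?_ <;> rintro ⟨e1, e2⟩ <;> rw [Fin.ext_iff] at e1 e2 <;> omega
  show fpsi i j ψ (Sig + t • H0) 0 = _
  simp only [fpsi, if_pos rfl]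
  rw [condCov_add_smul Sig _ _ _ _ h1 h2 h3 t]
  have e1 : H0 j i = 1 := by
    rw [hH0, Matrix.add_apply, Matrix.single_apply_same, std_ne _ _ _ _ ?_, add_zero]
    rintro ⟨f1, f2⟩
    rw [Fin.ext_iff] at f1 f2
    omega
  have e2 : H0 0 0 = 0 := by
    refine hent _ _ ?_ ?_ <;> rintro ⟨f1, f2⟩ <;> rw [Fin.ext_iff] at f1 f2 <;> omega
  simp only [Matrix.add_apply, Matrix.smul_apply, smul_eq_mul, e1, e2, if_true]
  ring

lemma Lval_col0 (i j : Fin (n + 2)) (hij : i < j) (ψ : ℝ)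
    {Sig : Matrix (Fin (n + 2)) (Fin (n + 2)) ℝ} (hpd : Sig.PosDef)
    (m : Fin (n + 2)) (hm : m ≠ 0) (hmj : (m : ℕ) < (j : ℕ)) :
    Lval i j ψ Sig m 0 = 0 := by
  have hij' : (i : ℕ) < (j : ℕ) := hij
  have hB : Bmat i j 0 = Matrix.single j i 1 + Matrix.single i j 1 := by simp [Bmat]
  unfold Lval
  rw [hB]
  set H0 : Matrix (Fin (n + 2)) (Fin (n + 2)) ℝ :=
    Matrix.single j i 1 + Matrix.single i j 1 with hH0
  refine fderiv_line (diff_fpsi_comp i j ψ hpd m)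
    (c := condCov Sig (Finset.Iio m) m m - Sig 0 0) ?_
  intro t
  have hent : ∀ a b : Fin (n + 2), ¬(j = a ∧ i = b) → ¬(i = a ∧ j = b) → H0 a b = 0 := by
    intro a b hx hy
    rw [hH0, Matrix.add_apply, std_ne _ _ _ _ hx, std_ne _ _ _ _ hy, add_zero]
  have h1 : ∀ a ∈ Finset.Iio m, H0 m a = 0 := by
    intro a ha
    rw [Finset.mem_Iio, Fin.lt_def] at ha
    refine hent _ _ ?_ ?_ <;> rintro ⟨e1, e2⟩ <;> rw [Fin.ext_iff] at e1 e2 <;> omega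
  have h2 : ∀ b ∈ Finset.Iio m, H0 b m = 0 := by
    intro b hb
    rw [Finset.mem_Iio, Fin.lt_def] at hb
    refine hent _ _ ?_ ?_ <;> rintro ⟨e1, e2⟩ <;> rw [Fin.ext_iff] at e1 e2 <;> omega
  have h3 : ∀ a ∈ Finset.Iio m, ∀ b ∈ Finset.Iio m, H0 a b = 0 := by
    intro a ha b hb
    rw [Finset.mem_Iio, Fin.lt_def] at ha hb
    refine hent _ _ ?_ ?_ <;> rintro ⟨e1, e2⟩ <;> rw [Fin.ext_iff] at e1 e2 <;> omega
  show fpsi i j ψ (Sig + t • H0) m = _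
  simp only [fpsi, if_neg hm]
  rw [condCov_add_smul Sig _ _ _ _ h1 h2 h3 t]
  have e1 : H0 m m = 0 := by
    refine hent _ _ ?_ ?_ <;> rintro ⟨f1, f2⟩ <;> rw [Fin.ext_iff] at f1 f2 <;> omega
  have e2 : H0 0 0 = 0 := by
    refine hent _ _ ?_ ?_ <;> rintro ⟨f1, f2⟩ <;> rw [Fin.ext_iff] at f1 f2 <;> omega
  simp only [Matrix.add_apply, Matrix.smul_apply, smul_eq_mul, e1, e2, if_true]
  ring

end Facts2

theorem stmt13 {n : ℕ} (i j : Fin (n + 2)) (hij : i < j) (ψ : ℝ)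
    (Sig : Matrix (Fin (n + 2)) (Fin (n + 2)) ℝ) (hsym : Sig.IsSymm) (hpd : Sig.PosDef) :
    DifferentiableAt ℝ (fpsi i j ψ) Sig ∧
    ∀ y : Fin (n + 2) → ℝ, ∃ H : Matrix (Fin (n + 2)) (Fin (n + 2)) ℝ,
      H.IsSymm ∧ fderiv ℝ (fpsi i j ψ) Sig H = y := by
  have hij' : (i : ℕ) < (j : ℕ) := hij
  have hdiffc : ∀ m, DifferentiableAt ℝ (fun M => fpsi i j ψ M m) Sig :=
    diff_fpsi_comp i j ψ hpd
  have hdiff : DifferentiableAt ℝ (fpsi i j ψ) Sig := differentiableAt_pi.mpr hdiffc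
  refine ⟨hdiff, ?_⟩
  have hpi : fderiv ℝ (fpsi i j ψ) Sig
      = ContinuousLinearMap.pi fun m => fderiv ℝ (fun M => fpsi i j ψ M m) Sig :=
    fderiv_pi hdiffc
  have hcomp : ∀ (H : Matrix (Fin (n + 2)) (Fin (n + 2)) ℝ) m,
      fderiv ℝ (fpsi i j ψ) Sig H m = fderiv ℝ (fun M => fpsi i j ψ M m) Sig H := by
    intro H m
    rw [hpi]
    rfl
  set r : Fin (n + 2) → ℕ := fun k =>
    if (k : ℕ) = 0 then (j : ℕ) else if (k : ℕ) < (j : ℕ) then (k : ℕ) else (k : ℕ) + 1 with hr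
  set Lmat : Matrix (Fin (n + 2)) (Fin (n + 2)) ℝ :=
    Matrix.of fun m k => Lval i j ψ Sig m k with hLmat
  have hdiag : ∀ k, Lmat k k = 1 := by
    intro k
    by_cases hk : k = 0
    · subst hk
      simpa [hLmat] using Lval_00 i j hij ψ hpd
    · simpa [hLmat] using Lval_diag i j ψ hpd k k hk hk le_rfl
  have hzero : ∀ m k, k ≠ m → r m < r k → Lmat m k = 0 := by
    intro m k hne hlt
    by_cases hm : m = 0
    · subst hm
      have hk : k ≠ 0 := fun h => hne (h.trans rfl)
      have hk' : (k : ℕ) ≠ 0 := by exact fun h => hk (Fin.ext (by rw [h, Fin.val_zero]))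
      have hik : (i : ℕ) ≤ (k : ℕ) := by
        simp only [hr, Fin.val_zero] at hlt
        split_ifs at hlt <;> omega
      simpa [hLmat] using Lval_row0 i j hij ψ hpd k hk hik
    · by_cases hk : k = 0
      · subst hk
        have hm' : (m : ℕ) ≠ 0 := by exact fun h => hm (Fin.ext (by rw [h, Fin.val_zero]))
        have hmj : (m : ℕ) < (j : ℕ) := by
          simp only [hr, Fin.val_zero] at hlt
          split_ifs at hlt <;> omega
        simpa [hLmat] using Lval_col0 i j hij ψ hpd m hm hmj
      · have hm' : (m : ℕ) ≠ 0 := by exact fun h => hm (Fin.ext (by rw [h, Fin.val_zero]))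
        have hk' : (k : ℕ) ≠ 0 := by exact fun h => hk (Fin.ext (by rw [h, Fin.val_zero]))
        have hmk : (m : ℕ) ≤ (k : ℕ) := by
          simp only [hr] at hlt
          split_ifs at hlt <;> omega
        have := Lval_diag i j ψ hpd k m hk hm hmk
        rw [if_neg hne] at this
        simpa [hLmat] using this
  have hinj : Function.Injective (Matrix.toLin' Lmat) := by
    refine (injective_iff_map_eq_zero _).mpr ?_
    intro c hc
    have hrow : ∀ m : Fin (n + 2), ∑ k, Lmat m k * c k = 0 := by
      intro m
      have h := congrFun hc m
      simpa [Matrix.toLin'_apply, Matrix.mulVec, dotProduct] using h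
    have main : ∀ N, ∀ k : Fin (n + 2), r k < N → c k = 0 := by
      intro N
      induction N with
      | zero => intro k h; exact absurd h (Nat.not_lt_zero _)
      | succ N ih =>
        intro k hk
        have hsum := hrow k
        have hz : ∀ b ∈ Finset.univ, b ≠ k → Lmat k b * c b = 0 := by
          intro b _ hb
          rcases Nat.lt_or_ge (r b) (r k) with h | h
          · rw [ih b (by omega), mul_zero]
          · rcases Nat.eq_or_lt_of_le h with he | hl
            · exfalso
              apply hb
              rw [Fin.ext_iff]
              simp only [hr] at he
              split_ifs at he <;> omega
            · rw [hzero k b hb hl, zero_mul]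
        have hsingle := Finset.sum_eq_single k hz (fun h => absurd (Finset.mem_univ k) h)
        rw [hsingle, hdiag k] at hsum
        simpa using hsum
    funext k
    exact main (r k + 1) k (Nat.lt_succ_self _)
  have hsurj := LinearMap.injective_iff_surjective.mp hinj
  intro y
  obtain ⟨c, hc⟩ := hsurj y
  refine ⟨∑ k, c k • Bmat i j k, ?_, ?_⟩
  · have hstds : ∀ p q : Fin (n + 2), (Matrix.single p q (1 : ℝ))ᵀ = Matrix.single q p 1 := by
      intro p q
      ext a b
      simp [Matrix.transpose_apply, Matrix.single, and_comm]
    show (∑ k, c k • Bmat i j k)ᵀ = ∑ k, c k • Bmat i j k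
    rw [Matrix.transpose_sum]
    refine Finset.sum_congr rfl fun k _ => ?_
    rw [Matrix.transpose_smul]
    congr 1
    by_cases hk : k = 0
    · subst hk
      rw [show Bmat i j (0 : Fin (n + 2)) = Matrix.single j i 1 + Matrix.single i j 1
          from by simp [Bmat]]
      rw [Matrix.transpose_add, hstds, hstds]
      exact add_comm _ _
    · rw [show Bmat i j k = Matrix.single k k 1 from by simp [Bmat, hk], hstds]
  · funext m
    calc fderiv ℝ (fpsi i j ψ) Sig (∑ k, c k • Bmat i j k) m
        = (∑ k, fderiv ℝ (fpsi i j ψ) Sig (c k • Bmat i j k)) m := by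
          rw [map_sum]
      _ = ∑ k, c k * (fderiv ℝ (fpsi i j ψ) Sig (Bmat i j k) m) := by
          rw [Finset.sum_apply]
          refine Finset.sum_congr rfl fun k _ => ?_
          rw [(fderiv ℝ (fpsi i j ψ) Sig).map_smul]
          simp
      _ = ∑ k, Lmat m k * c k := by
          refine Finset.sum_congr rfl fun k _ => ?_
          rw [hcomp]
          rw [mul_comm]
          rfl
      _ = (Lmat *ᵥ c) m := by simp [Matrix.mulVec, dotProduct]
      _ = y m := by
          rw [← Matrix.toLin'_apply, hc]
end
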